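/- arXiv:2408.05969 — 7 statements merged into one kernel-verified Lean document; each statement's English description precedes it below -/
import Mathlib

section
/- For every real X ≥ 1, the identity 2γ + ∑_{n ≤ X} μ(n)·(log n)² = ∑_{kℓ ≤ X} μ(ℓ)·(Λ⋆Λ(k) − Λ(k)·log k + 2γ) holds, where γ is the Euler–Mascheroni constant, μ is the Möbius function, Λ is the von Mangoldt function, and Λ⋆Λ denotes Dirichlet convolution. -/
open Finset Real ArithmeticFunction
open scoped ArithmeticFunction.Moebius ArithmeticFunction.zeta

/-- Dirichlet convolution `Λ ⋆ Λ`. -/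
noncomputable def LamLam (k : ℕ) : ℝ :=
  ∑ d ∈ k.divisors, Λ d * Λ (k / d)

namespace StmtAux

open ArithmeticFunction

/-- pointwise multiplication by `log` is a derivation for Dirichlet convolution -/
lemma pmul_log_mul (f g : ArithmeticFunction ℝ) :
    (f * g).pmul ArithmeticFunction.log
      = (f.pmul ArithmeticFunction.log) * g + f * (g.pmul ArithmeticFunction.log) := by
  ext n
  simp only [pmul_apply, mul_apply, ArithmeticFunction.add_apply, log_apply, Finset.sum_mul,
    ← Finset.sum_add_distrib]
  refine Finset.sum_congr rfl fun p hp => ?_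
  obtain ⟨hpn, hn⟩ := Nat.mem_divisorsAntidiagonal.mp hp
  have h1 : p.1 ≠ 0 := by rintro h; rw [h, zero_mul] at hpn; exact hn hpn.symm
  have h2 : p.2 ≠ 0 := by rintro h; rw [h, mul_zero] at hpn; exact hn hpn.symm
  have hlog : Real.log n = Real.log p.1 + Real.log p.2 := by
    rw [← hpn, Nat.cast_mul, Real.log_mul (by exact_mod_cast h1) (by exact_mod_cast h2)]
  rw [hlog]; ring

lemma negApply (f : ArithmeticFunction ℝ) (n : ℕ) : (-f) n = -(f n) := rfl

lemma subApply (f g : ArithmeticFunction ℝ) (n : ℕ) : (f - g) n = f n - g n := by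
  rw [sub_eq_add_neg, ArithmeticFunction.add_apply, negApply, sub_eq_add_neg]

lemma neg_pmul (f g : ArithmeticFunction ℝ) : (-f).pmul g = -(f.pmul g) := by
  ext n; rw [pmul_apply, negApply, negApply, pmul_apply, neg_mul]

lemma one_pmul_log : (1 : ArithmeticFunction ℝ).pmul ArithmeticFunction.log = 0 := by
  ext n
  simp only [pmul_apply, one_apply, log_apply, ArithmeticFunction.zero_apply]
  split_ifs with h
  · subst h; simp
  · simp

lemma zeta_pmul_log :
    (ζ : ArithmeticFunction ℝ).pmul ArithmeticFunction.log = ArithmeticFunction.log := by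
  ext n
  simp only [pmul_apply, natCoe_apply, zeta_apply, log_apply]
  rcases eq_or_ne n 0 with rfl | h
  · simp
  · simp [h]

lemma moebius_pmul_log :
    (μ : ArithmeticFunction ℝ).pmul ArithmeticFunction.log = -(Λ * μ) := by
  have h0 := pmul_log_mul (μ : ArithmeticFunction ℝ) (ζ : ArithmeticFunction ℝ)
  rw [coe_moebius_mul_coe_zeta, one_pmul_log, zeta_pmul_log,
    moebius_mul_log_eq_vonMangoldt] at h0
  have h1 : ((μ : ArithmeticFunction ℝ).pmul ArithmeticFunction.log) * ζ = -Λ := by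
    linear_combination -h0
  calc (μ : ArithmeticFunction ℝ).pmul ArithmeticFunction.log
      = ((μ : ArithmeticFunction ℝ).pmul ArithmeticFunction.log) * (ζ * μ) := by
        rw [coe_zeta_mul_coe_moebius, mul_one]
    _ = (((μ : ArithmeticFunction ℝ).pmul ArithmeticFunction.log) * ζ) * μ := by
        rw [mul_assoc]
    _ = -(Λ * μ) := by rw [h1]; ring

/-- key identity: `μ(n) log² n = ((Λ⋆Λ − Λ·log) ⋆ μ)(n)` -/
lemma key :
    (μ : ArithmeticFunction ℝ).pmul (ArithmeticFunction.log.pmul ArithmeticFunction.log)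
      = (Λ * Λ - vonMangoldt.pmul ArithmeticFunction.log) * μ := by
  have h0 := pmul_log_mul Λ (μ : ArithmeticFunction ℝ)
  have h1 := moebius_pmul_log
  calc (μ : ArithmeticFunction ℝ).pmul (ArithmeticFunction.log.pmul ArithmeticFunction.log)
      = ((μ : ArithmeticFunction ℝ).pmul ArithmeticFunction.log).pmul
          ArithmeticFunction.log := by rw [pmul_assoc]
    _ = (-(Λ * μ)).pmul ArithmeticFunction.log := by rw [h1]
    _ = -((Λ * μ).pmul ArithmeticFunction.log) := neg_pmul _ _
    _ = -((vonMangoldt.pmul ArithmeticFunction.log) * μ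
          + Λ * ((μ : ArithmeticFunction ℝ).pmul ArithmeticFunction.log)) := by rw [h0]
    _ = -((vonMangoldt.pmul ArithmeticFunction.log) * μ + Λ * (-(Λ * μ))) := by rw [h1]
    _ = (Λ * Λ - vonMangoldt.pmul ArithmeticFunction.log) * μ := by ring

lemma hyperbola (N : ℕ) (g : ℕ → ℕ → ℝ) :
    ∑ m ∈ Finset.Icc 1 N, ∑ p ∈ m.divisorsAntidiagonal, g p.1 p.2
      = ∑ k ∈ Finset.Icc 1 N, ∑ l ∈ Finset.Icc 1 (N / k), g k l := by
  rw [Finset.sum_sigma' (Finset.Icc 1 N) (fun m => m.divisorsAntidiagonal)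
      (fun m p => g p.1 p.2),
    Finset.sum_sigma' (Finset.Icc 1 N) (fun k => Finset.Icc 1 (N / k)) (fun k l => g k l)]
  refine Finset.sum_nbij' (fun q => ⟨q.2.1, q.2.2⟩) (fun q => ⟨q.1 * q.2, (q.1, q.2)⟩)
    ?_ ?_ ?_ ?_ ?_
  · rintro ⟨m, a, b⟩ hq
    simp only [Finset.mem_sigma, Finset.mem_Icc, Nat.mem_divisorsAntidiagonal] at hq ⊢
    obtain ⟨⟨hm1, hmN⟩, hab, hm0⟩ := hq
    have ha : 0 < a := Nat.pos_of_ne_zero fun h => hm0 (by rw [← hab, h, zero_mul])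
    have hb : 0 < b := Nat.pos_of_ne_zero fun h => hm0 (by rw [← hab, h, mul_zero])
    refine ⟨⟨ha, ?_⟩, hb, ?_⟩
    · calc a ≤ a * b := Nat.le_mul_of_pos_right a hb
        _ ≤ N := by rw [hab]; exact hmN
    · rw [Nat.le_div_iff_mul_le ha, mul_comm, hab]; exact hmN
  · rintro ⟨k, l⟩ hq
    simp only [Finset.mem_sigma, Finset.mem_Icc, Nat.mem_divisorsAntidiagonal] at hq ⊢
    obtain ⟨⟨hk1, hkN⟩, hl1, hlN⟩ := hq
    have hkl : k * l ≤ N := by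
      rw [Nat.le_div_iff_mul_le (by omega : 0 < k)] at hlN
      rw [mul_comm]; exact hlN
    exact ⟨⟨Nat.one_le_iff_ne_zero.mpr (Nat.mul_ne_zero (by omega) (by omega)), hkl⟩, trivial,
      Nat.mul_ne_zero (by omega) (by omega)⟩
  · rintro ⟨m, a, b⟩ hq
    simp only [Finset.mem_sigma, Nat.mem_divisorsAntidiagonal] at hq
    obtain ⟨_, hab, _⟩ := hq
    simp [hab]
  · rintro ⟨k, l⟩ _
    rfl
  · rintro ⟨m, a, b⟩ _
    rfl

lemma LamLam_eq (k : ℕ) : LamLam k = (Λ * Λ) k := by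
  rw [LamLam, mul_apply, Nat.sum_divisorsAntidiagonal (fun a b => Λ a * Λ b)]

end StmtAux

theorem stmt0 (X : ℝ) (hX : 1 ≤ X) :
    2 * Real.eulerMascheroniConstant
      + ∑ n ∈ Finset.Icc 1 ⌊X⌋₊, (ArithmeticFunction.moebius n : ℝ) * (Real.log n) ^ 2
    = ∑ k ∈ Finset.Icc 1 ⌊X⌋₊, ∑ ℓ ∈ Finset.Icc 1 ⌊X / k⌋₊,
        (ArithmeticFunction.moebius ℓ : ℝ) * (LamLam k - Λ k * Real.log k + 2 * Real.eulerMascheroniConstant) := by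
  set N := ⌊X⌋₊ with hN
  have hN1 : 1 ≤ N := Nat.one_le_floor_iff X |>.mpr hX
  -- rewrite inner index sets
  have hfloor : ∀ k ∈ Finset.Icc 1 N, ∑ ℓ ∈ Finset.Icc 1 ⌊X / k⌋₊,
      (μ ℓ : ℝ) * (LamLam k - Λ k * Real.log k + 2 * Real.eulerMascheroniConstant)
      = ∑ ℓ ∈ Finset.Icc 1 (N / k),
      (μ ℓ : ℝ) * (LamLam k - Λ k * Real.log k + 2 * Real.eulerMascheroniConstant) := by
    intro k hk
    rw [Nat.floor_div_natCast X k]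
  rw [Finset.sum_congr rfl hfloor, ← StmtAux.hyperbola N
    (fun k l => (μ l : ℝ) * (LamLam k - Λ k * Real.log k + 2 * Real.eulerMascheroniConstant))]
  have hsplit : ∀ m ∈ Finset.Icc 1 N,
      ∑ p ∈ m.divisorsAntidiagonal,
        (μ p.2 : ℝ) * (LamLam p.1 - Λ p.1 * Real.log p.1 + 2 * Real.eulerMascheroniConstant)
      = (μ m : ℝ) * (Real.log m) ^ 2
        + (if m = 1 then (2 * Real.eulerMascheroniConstant) else 0) := by
    intro m hm
    have hmul : ∑ p ∈ m.divisorsAntidiagonal,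
        (μ p.2 : ℝ) * (LamLam p.1 - Λ p.1 * Real.log p.1)
        = (μ m : ℝ) * (Real.log m) ^ 2 := by
      have := congrArg (fun f => f m) StmtAux.key
      simp only [pmul_apply, mul_apply, intCoe_apply, log_apply, StmtAux.subApply] at this
      rw [← sq] at this
      rw [this]
      refine Finset.sum_congr rfl fun p hp => ?_
      rw [StmtAux.LamLam_eq, ArithmeticFunction.mul_apply]
      ring
    have hzeta : ∑ p ∈ m.divisorsAntidiagonal, (μ p.2 : ℝ)
        = (if m = 1 then (1 : ℝ) else 0) := by
      have h1 : ((ζ : ArithmeticFunction ℝ) * (μ : ArithmeticFunction ℝ)) m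
          = (1 : ArithmeticFunction ℝ) m := by rw [coe_zeta_mul_coe_moebius]
      rw [mul_apply, one_apply] at h1
      rw [← h1]
      refine Finset.sum_congr rfl fun p hp => ?_
      obtain ⟨hpm, hm0⟩ := Nat.mem_divisorsAntidiagonal.mp hp
      have h1' : p.1 ≠ 0 := fun h => hm0 (by rw [← hpm, h, zero_mul])
      simp [natCoe_apply, zeta_apply, h1']
    calc ∑ p ∈ m.divisorsAntidiagonal,
          (μ p.2 : ℝ) * (LamLam p.1 - Λ p.1 * Real.log p.1 + 2 * Real.eulerMascheroniConstant)
        = ∑ p ∈ m.divisorsAntidiagonal,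
            ((μ p.2 : ℝ) * (LamLam p.1 - Λ p.1 * Real.log p.1)
              + 2 * Real.eulerMascheroniConstant * (μ p.2 : ℝ)) := by
          refine Finset.sum_congr rfl fun p _ => ?_; ring
      _ = (μ m : ℝ) * (Real.log m) ^ 2
            + 2 * Real.eulerMascheroniConstant * (if m = 1 then (1 : ℝ) else 0) := by
          rw [Finset.sum_add_distrib, hmul, ← Finset.mul_sum, hzeta]
      _ = (μ m : ℝ) * (Real.log m) ^ 2
            + (if m = 1 then (2 * Real.eulerMascheroniConstant) else 0) := by
          split_ifs with h <;> ring
  rw [Finset.sum_congr rfl hsplit, Finset.sum_add_distrib, Finset.sum_ite_eq' (Finset.Icc 1 N) 1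
    (fun _ => 2 * Real.eulerMascheroniConstant)]
  rw [if_pos (Finset.mem_Icc.mpr ⟨le_refl 1, hN1⟩)]
  ring
end

section
/- The arithmetic identity μ(n)·(log n)² = (μ⋆Λ⋆Λ)(n) − (μ⋆(Λ·L))(n) holds for all positive integers n, where L(n) = log n and ⋆ denotes Dirichlet convolution. -/
open Finset Real ArithmeticFunction ArithmeticFunction.Moebius

namespace AuxStmt1

open ArithmeticFunction ArithmeticFunction.zeta

/-- Pointwise multiplication by `log` is a derivation for Dirichlet convolution. -/
lemma pmul_log_mul (f g : ArithmeticFunction ℝ) :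
    (f * g).pmul ArithmeticFunction.log
      = f.pmul ArithmeticFunction.log * g + f * g.pmul ArithmeticFunction.log := by
  ext n
  simp only [pmul_apply, mul_apply, log_apply, ArithmeticFunction.add_apply, ← Finset.sum_add_distrib,
    Finset.sum_mul]
  refine Finset.sum_congr rfl fun p hp => ?_
  obtain ⟨h, hn⟩ := Nat.mem_divisorsAntidiagonal.mp hp
  have h1 : p.1 ≠ 0 := by intro h1; rw [h1, zero_mul] at h; exact hn h.symm
  have h2 : p.2 ≠ 0 := by intro h2; rw [h2, mul_zero] at h; exact hn h.symm
  rw [← h, Nat.cast_mul, Real.log_mul (by exact_mod_cast h1) (by exact_mod_cast h2)]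
  ring

lemma zeta_pmul_log :
    (ζ : ArithmeticFunction ℝ).pmul ArithmeticFunction.log = ArithmeticFunction.log := by
  ext n
  rcases eq_or_ne n 0 with rfl | hn
  · simp
  · simp [pmul_apply, natCoe_apply, hn]

lemma one_pmul_log : (1 : ArithmeticFunction ℝ).pmul ArithmeticFunction.log = 0 := by
  ext n
  rcases eq_or_ne n 1 with rfl | hn
  · simp
  · simp [pmul_apply, one_apply, hn]

lemma moebius_pmul_log :
    (μ : ArithmeticFunction ℝ).pmul ArithmeticFunction.log = -((μ : ArithmeticFunction ℝ) * Λ) := by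
  have h := pmul_log_mul (μ : ArithmeticFunction ℝ) (ζ : ArithmeticFunction ℝ)
  rw [coe_moebius_mul_coe_zeta, one_pmul_log, zeta_pmul_log,
    moebius_mul_log_eq_vonMangoldt] at h
  have h3 : (μ : ArithmeticFunction ℝ).pmul ArithmeticFunction.log
      * (ζ : ArithmeticFunction ℝ) = -Λ := eq_neg_of_add_eq_zero_left h.symm
  calc (μ : ArithmeticFunction ℝ).pmul ArithmeticFunction.log
      = (μ : ArithmeticFunction ℝ).pmul ArithmeticFunction.log
        * ((ζ : ArithmeticFunction ℝ) * (μ : ArithmeticFunction ℝ)) := by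
        rw [coe_zeta_mul_coe_moebius, mul_one]
    _ = -Λ * (μ : ArithmeticFunction ℝ) := by rw [← mul_assoc, h3]
    _ = -((μ : ArithmeticFunction ℝ) * Λ) := by ring

lemma neg_pmul_log (f : ArithmeticFunction ℝ) :
    (-f).pmul ArithmeticFunction.log = -(f.pmul ArithmeticFunction.log) := by
  ext n
  show (-f) n * ArithmeticFunction.log n = -(f n * ArithmeticFunction.log n)
  show -(f n) * ArithmeticFunction.log n = -(f n * ArithmeticFunction.log n)
  ring

lemma moebius_pmul_log_pmul_log :
    ((μ : ArithmeticFunction ℝ).pmul ArithmeticFunction.log).pmul ArithmeticFunction.log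
      + (μ : ArithmeticFunction ℝ) * (ArithmeticFunction.pmul Λ ArithmeticFunction.log)
      = (μ : ArithmeticFunction ℝ) * (Λ * Λ) := by
  rw [moebius_pmul_log, neg_pmul_log, pmul_log_mul, moebius_pmul_log]
  ring

end AuxStmt1

/-- `μ(n)·(log n)² = (μ⋆Λ⋆Λ)(n) − (μ⋆(Λ·L))(n)` for positive integers `n`. -/
theorem stmt1 (n : ℕ) (hn : 0 < n) :
    (μ n : ℝ) * (Real.log n) ^ 2
      = (∑ d ∈ n.divisors, (μ d : ℝ) * LamLam (n / d))
        - ∑ d ∈ n.divisors, (μ d : ℝ) * (Λ (n / d) * Real.log (n / d : ℕ)) := by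
  have h := congrArg (fun f => f n) AuxStmt1.moebius_pmul_log_pmul_log
  simp only [pmul_apply, log_apply, ArithmeticFunction.add_apply, mul_apply, intCoe_apply] at h
  have e1 : ∀ d, LamLam d = ∑ x ∈ d.divisorsAntidiagonal, Λ x.1 * Λ x.2 :=
    fun d => (Nat.sum_divisorsAntidiagonal (fun a b => Λ a * Λ b)).symm
  simp only [e1]
  rw [← Nat.sum_divisorsAntidiagonal
      (f := fun a b => (μ a : ℝ) * ∑ x ∈ b.divisorsAntidiagonal, Λ x.1 * Λ x.2),
    ← Nat.sum_divisorsAntidiagonal (f := fun a b => (μ a : ℝ) * (Λ b * Real.log b))]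
  rw [eq_sub_iff_add_eq]
  linarith [h]
end

section
/- For every real X ≥ 1, |m(X)| ≤ |M(X)|/X + (1/X²)·∫₁^X |M(t)| dt + 8/(3X), where M(X) = ∑_{n ≤ X} μ(n) and m(X) = ∑_{n ≤ X} μ(n)/n. -/
open Finset Real ArithmeticFunction
open scoped ArithmeticFunction.Moebius
open scoped ArithmeticFunction.zeta

/-- Mertens function `M(X) = ∑_{n ≤ X} μ(n)`. -/
noncomputable def Mf (X : ℝ) : ℝ := ∑ n ∈ Finset.Icc 1 ⌊X⌋₊, (μ n : ℝ)

/-- `m(X) = ∑_{n ≤ X} μ(n)/n`. -/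
noncomputable def mf (X : ℝ) : ℝ := ∑ n ∈ Finset.Icc 1 ⌊X⌋₊, (μ n : ℝ) / n

open MeasureTheory intervalIntegral

noncomputable def Pq (u : ℝ) : ℝ := 1 - 3/2 * u + 1/2 * u^3
noncomputable def phiF (θ : ℝ) : ℝ := θ * (1 - θ) * (1 - 2*θ)
noncomputable def sigF (θ : ℝ) : ℝ := θ * (1 - θ)
noncomputable def Gf (y : ℝ) : ℝ :=
  -phiF (y - ⌊y⌋₊) / (4 * y^2) + (sigF (y - ⌊y⌋₊))^2 / (8 * y^3)

lemma sum_Icc_id_real (F : ℕ) : ∑ m ∈ Icc 1 F, (m:ℝ) = F*(F+1)/2 := by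
  induction F with
  | zero => simp
  | succ F ih =>
      rw [Finset.sum_Icc_succ_top (by omega)]
      push_cast [ih]; ring

lemma sum_Icc_cube_real (F : ℕ) : ∑ m ∈ Icc 1 F, (m:ℝ)^3 = (F*(F+1)/2)^2 := by
  induction F with
  | zero => simp
  | succ F ih =>
      rw [Finset.sum_Icc_succ_top (by omega)]
      push_cast [ih]; ring

lemma inner_sum_eq (Y : ℝ) (hY : 1 ≤ Y) :
    ∑ m ∈ Icc 1 ⌊Y⌋₊, Pq (m / Y) = 3/8 * Y - 1/2 + 1/(8*Y) + Gf Y := by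
  have hY0 : Y ≠ 0 := by positivity
  set F := ⌊Y⌋₊ with hFdef
  have expand : ∀ m ∈ Icc 1 F, Pq ((m:ℝ) / Y)
      = 1 - (3/(2*Y)) * (m:ℝ) + (1/(2*Y^3)) * (m:ℝ)^3 := by
    intro m _; simp only [Pq]; field_simp
  rw [Finset.sum_congr rfl expand]
  rw [Finset.sum_add_distrib, Finset.sum_sub_distrib, ← Finset.mul_sum, ← Finset.mul_sum,
    sum_Icc_id_real, sum_Icc_cube_real, Finset.sum_const, Nat.card_Icc]
  simp only [Gf, phiF, sigF, smul_eq_mul, mul_one]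
  rw [Nat.add_sub_cancel, nsmul_eq_mul, mul_one, ← hFdef]
  field_simp
  ring


lemma moebius_double (N : ℕ) (hN : 1 ≤ N) (W : ℕ → ℝ) :
    ∑ n ∈ Icc 1 N, (μ n : ℝ) * ∑ m ∈ Icc 1 (N / n), W (n * m) = W 1 := by
  have step1 : ∑ n ∈ Icc 1 N, (μ n : ℝ) * ∑ m ∈ Icc 1 (N / n), W (n * m)
      = ∑ p ∈ (Icc 1 N).sigma (fun n => Icc 1 (N / n)), (μ p.1 : ℝ) * W (p.1 * p.2) := by
    rw [Finset.sum_sigma]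
    exact Finset.sum_congr rfl (fun n _ => by rw [Finset.mul_sum])
  have step2 : ∑ p ∈ (Icc 1 N).sigma (fun n => Icc 1 (N / n)), (μ p.1 : ℝ) * W (p.1 * p.2)
      = ∑ q ∈ (Icc 1 N).sigma (fun k => k.divisorsAntidiagonal), (μ q.2.1 : ℝ) * W q.1 := by
    apply Finset.sum_nbij' (i := fun p => (⟨p.1 * p.2, (p.1, p.2)⟩ :
        (k : ℕ) × (ℕ × ℕ))) (j := fun q => ⟨q.2.1, q.2.2⟩)
    · intro a ha
      simp only [Finset.mem_sigma, Finset.mem_Icc, Nat.mem_divisorsAntidiagonal] at ha ⊢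
      obtain ⟨⟨h1n, hnN⟩, h1m, hmN⟩ := ha
      have hmul : a.2 * a.1 ≤ N := (Nat.le_div_iff_mul_le (by omega)).mp hmN
      have h0 : 1 ≤ a.1 * a.2 := Nat.one_le_iff_ne_zero.mpr (by positivity)
      exact ⟨⟨h0, by rw [Nat.mul_comm] at hmul; exact hmul⟩, trivial, by positivity⟩
    · intro b hb
      simp only [Finset.mem_sigma, Finset.mem_Icc, Nat.mem_divisorsAntidiagonal] at hb ⊢
      obtain ⟨⟨h1k, hkN⟩, hmul, hk0⟩ := hb
      have h1 : 1 ≤ b.2.1 := by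
        rcases Nat.eq_zero_or_pos b.2.1 with h | h
        · rw [h, zero_mul] at hmul; omega
        · exact h
      have h2 : 1 ≤ b.2.2 := by
        rcases Nat.eq_zero_or_pos b.2.2 with h | h
        · rw [h, mul_zero] at hmul; omega
        · exact h
      refine ⟨⟨h1, ?_⟩, h2, ?_⟩
      · calc b.2.1 ≤ b.2.1 * b.2.2 := Nat.le_mul_of_pos_right _ (by omega)
          _ = b.1 := hmul
          _ ≤ N := hkN
      · rw [Nat.le_div_iff_mul_le (by omega)]
        calc b.2.2 * b.2.1 = b.2.1 * b.2.2 := Nat.mul_comm _ _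
          _ = b.1 := hmul
          _ ≤ N := hkN
    · intro a _; rfl
    · intro b hb
      simp only [Finset.mem_sigma, Nat.mem_divisorsAntidiagonal] at hb
      obtain ⟨_, hmul, _⟩ := hb
      exact Sigma.ext (by simpa using hmul) (by simp)
    · intro a _; rfl
  have step3 : ∑ q ∈ (Icc 1 N).sigma (fun k => k.divisorsAntidiagonal), (μ q.2.1 : ℝ) * W q.1
      = ∑ k ∈ Icc 1 N, (∑ p ∈ k.divisorsAntidiagonal, (μ p.1 : ℝ)) * W k := by
    rw [Finset.sum_sigma]
    exact Finset.sum_congr rfl (fun k _ => by rw [Finset.sum_mul])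
  have step4 : ∀ k ∈ Icc 1 N, (∑ p ∈ k.divisorsAntidiagonal, (μ p.1 : ℝ)) * W k
      = (if k = 1 then (1:ℝ) else 0) * W k := by
    intro k hk
    simp only [Finset.mem_Icc] at hk
    congr 1
    have hz : ∀ p ∈ k.divisorsAntidiagonal, μ p.1 = μ p.1 * (ζ : ArithmeticFunction ℤ) p.2 := by
      intro p hp
      rw [Nat.mem_divisorsAntidiagonal] at hp
      have h2 : p.2 ≠ 0 := by rintro h; apply hp.2; rw [← hp.1, h, mul_zero]
      rw [ArithmeticFunction.natCoe_apply, ArithmeticFunction.zeta_apply_ne h2]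
      push_cast; ring
    have hsum : (∑ p ∈ k.divisorsAntidiagonal, μ p.1)
        = ((μ * ζ : ArithmeticFunction ℤ) k) := by
      rw [ArithmeticFunction.mul_apply]
      exact Finset.sum_congr rfl hz
    rw [moebius_mul_coe_zeta, ArithmeticFunction.one_apply] at hsum
    have : (∑ p ∈ k.divisorsAntidiagonal, (μ p.1 : ℝ))
        = ((∑ p ∈ k.divisorsAntidiagonal, μ p.1 : ℤ) : ℝ) := by push_cast; rfl
    rw [this, hsum]
    split <;> norm_num
  rw [step1, step2, step3, Finset.sum_congr rfl step4,
    Finset.sum_eq_single_of_mem 1 (by simp [hN]) (fun b _ hb => by simp [hb])]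
  simp


lemma ae_ne_real (c : ℝ) : ∀ᵐ t : ℝ, t ≠ c := by
  rw [MeasureTheory.ae_iff]
  have : {t : ℝ | ¬ t ≠ c} = {c} := by ext t; simp
  rw [this]
  exact Real.volume_singleton

lemma floor_eq_on_piece {j : ℕ} {t : ℝ} (hj : 1 ≤ j) (h1 : (j:ℝ) ≤ t) (h2 : t < (j:ℝ)+1) :
    ⌊t⌋₊ = j := by
  have h0 : (1:ℝ) ≤ (j:ℝ) := by exact_mod_cast hj
  rw [Nat.floor_eq_iff (by linarith)]
  exact ⟨by exact_mod_cast h1, by exact_mod_cast h2⟩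

lemma stepPiece (q : ℕ → ℝ) (j : ℕ) (hj : 1 ≤ j) {a b : ℝ} (ha : (j:ℝ) ≤ a) (hab : a ≤ b)
    (hb : b ≤ (j:ℝ)+1) : ∫ t in a..b, q ⌊t⌋₊ = (b - a) * q j := by
  rw [intervalIntegral.integral_congr_ae (g := fun _ => q j) ?_, intervalIntegral.integral_const,
    smul_eq_mul]
  filter_upwards [ae_ne_real ((j:ℝ)+1)] with t ht hmem
  rw [Set.uIoc_of_le hab] at hmem
  rw [floor_eq_on_piece hj (le_trans ha (le_of_lt hmem.1)) (lt_of_le_of_ne (le_trans hmem.2 hb) ht)]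

lemma stepPieceIntegrable (q : ℕ → ℝ) (j : ℕ) (hj : 1 ≤ j) {a b : ℝ} (ha : (j:ℝ) ≤ a)
    (hab : a ≤ b) (hb : b ≤ (j:ℝ)+1) :
    IntervalIntegrable (fun t => q ⌊t⌋₊) volume a b := by
  rw [intervalIntegrable_iff_integrableOn_Ioc_of_le hab]
  apply (integrableOn_const measure_Ioc_lt_top.ne :
    IntegrableOn (fun _ => q j) (Set.Ioc a b) volume).congr
  filter_upwards [MeasureTheory.ae_restrict_mem measurableSet_Ioc,
    MeasureTheory.ae_restrict_of_ae (ae_ne_real ((j:ℝ)+1))] with t hmem hne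
  rw [floor_eq_on_piece hj (le_trans ha (le_of_lt hmem.1))
    (lt_of_le_of_ne (le_trans hmem.2 hb) hne)]

lemma stepIntegrableUpTo (q : ℕ → ℝ) : ∀ F : ℕ, 1 ≤ F → ∀ x : ℝ, (F:ℝ) ≤ x → x ≤ (F:ℝ)+1 →
    IntervalIntegrable (fun t => q ⌊t⌋₊) volume 1 x := by
  intro F
  induction F with
  | zero => omega
  | succ F ih =>
      intro _ x hx1 hx2
      rcases Nat.eq_zero_or_pos F with hF | hF
      · subst hF
        exact stepPieceIntegrable q 1 le_rfl (by norm_num) (by push_cast at hx1 ⊢; linarith)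
          (by push_cast at hx2 ⊢; linarith)
      · have h1 : IntervalIntegrable (fun t => q ⌊t⌋₊) volume 1 (F+1:ℕ) := by
          apply ih hF
          · push_cast; linarith
          · push_cast; linarith
        have h2 : IntervalIntegrable (fun t => q ⌊t⌋₊) volume ((F+1:ℕ):ℝ) x := by
          apply stepPieceIntegrable q (F+1) (by omega)
          · push_cast; linarith [hx1]
          · push_cast at hx1 ⊢; linarith
          · push_cast at hx2 ⊢; linarith
        exact h1.trans h2

lemma stepIntegralUpTo (q : ℕ → ℝ) : ∀ F : ℕ, 1 ≤ F → ∀ x : ℝ, (F:ℝ) ≤ x → x ≤ (F:ℝ)+1 →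
    ∫ t in (1:ℝ)..x, q ⌊t⌋₊ = ∑ j ∈ Icc 1 (F-1), q j + (x - F) * q F := by
  intro F
  induction F with
  | zero => omega
  | succ F ih =>
      intro _ x hx1 hx2
      rcases Nat.eq_zero_or_pos F with hF | hF
      · subst hF
        rw [stepPiece q 1 le_rfl (by norm_num) (by push_cast at hx1 ⊢; linarith)
          (by push_cast at hx2 ⊢; linarith)]
        simp
      · have key := ih hF ((F:ℝ)+1) (by linarith) le_rfl
        have h1 : IntervalIntegrable (fun t => q ⌊t⌋₊) volume 1 ((F:ℝ)+1) := by
          have := stepIntegrableUpTo q F hF ((F:ℝ)+1) (by linarith) le_rfl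
          exact this
        have h2 : IntervalIntegrable (fun t => q ⌊t⌋₊) volume ((F:ℝ)+1) x := by
          apply stepPieceIntegrable q (F+1) (by omega)
          · push_cast; linarith [hx1]
          · push_cast at hx1 ⊢; linarith
          · push_cast at hx2 ⊢; linarith
        rw [← intervalIntegral.integral_add_adjacent_intervals h1 h2, key,
          stepPiece q (F+1) (by omega) (by push_cast; linarith)
            (by push_cast at hx1 ⊢; linarith) (by push_cast at hx2 ⊢; linarith)]
        have hsum : ∑ j ∈ Icc 1 F, q j = ∑ j ∈ Icc 1 (F-1), q j + q F := by
          have : F - 1 + 1 = F := by omega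
          rw [← this, Finset.sum_Icc_succ_top (by omega)]
          rw [this]
        have hFm : (F+1) - 1 = F := by omega
        rw [hFm, hsum]
        push_cast
        ring

lemma abel_discrete (c : ℕ → ℝ) (g : ℕ → ℝ) : ∀ F : ℕ, 1 ≤ F →
    ∑ n ∈ Icc 1 F, c n * g n
      = ∑ j ∈ Icc 1 (F-1), (∑ n ∈ Icc 1 j, c n) * (g j - g (j+1))
        + (∑ n ∈ Icc 1 F, c n) * g F := by
  intro F
  induction F with
  | zero => omega
  | succ F ih =>
      rcases Nat.eq_zero_or_pos F with hF | hF
      · subst hF; simp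
      · intro _
        have key := ih hF
        have hFm : (F+1) - 1 = F := by omega
        have e1 : ∑ n ∈ Icc 1 (F+1), c n * g n = ∑ n ∈ Icc 1 F, c n * g n + c (F+1) * g (F+1) :=
          Finset.sum_Icc_succ_top (by omega) _
        have e2 : ∑ j ∈ Icc 1 F, (∑ n ∈ Icc 1 j, c n) * (g j - g (j+1))
            = ∑ j ∈ Icc 1 (F-1), (∑ n ∈ Icc 1 j, c n) * (g j - g (j+1))
              + (∑ n ∈ Icc 1 F, c n) * (g F - g (F+1)) := by
          have h : F - 1 + 1 = F := by omega
          rw [← h, Finset.sum_Icc_succ_top (by omega), h]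
        have e3 : ∑ n ∈ Icc 1 (F+1), c n = ∑ n ∈ Icc 1 F, c n + c (F+1) :=
          Finset.sum_Icc_succ_top (by omega) _
        rw [hFm, e1, e2, e3, key]
        ring

lemma sig_le (θ : ℝ) : θ*(1-θ) ≤ 1/4 := by nlinarith [sq_nonneg (1-2*θ)]

lemma phi_le (θ : ℝ) (h0 : 0 ≤ θ) (h1 : θ ≤ 1) : θ*(1-θ)*(1-2*θ) ≤ 1/6 := by
  nlinarith [sq_nonneg (1-2*θ), sq_nonneg θ, sq_nonneg (1-θ), sq_nonneg (θ - 1/2),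
    mul_nonneg h0 (by linarith : (0:ℝ) ≤ 1-θ), sq_nonneg (2*θ - 1/2), sq_nonneg (2*θ - 3/2)]

lemma keyIneq (s θ : ℝ) (hs0 : 0 ≤ s) (hs1 : s ≤ 1) (h0 : 0 ≤ θ) (h1 : θ ≤ 1) :
    |2*(1 - 6*θ + 6*θ^2) - 4*s*(θ*(1-θ)*(1-2*θ)) + 3*s^2*(θ*(1-θ))^2
      - 2*s*(θ*(1-θ))*(1-2*θ)| ≤ 2 := by
  have hσ0 : 0 ≤ θ*(1-θ) := mul_nonneg h0 (by linarith)
  have hσ : θ*(1-θ) ≤ 1/4 := sig_le θ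
  have hφ : θ*(1-θ)*(1-2*θ) ≤ 1/6 := phi_le θ h0 h1
  have hE : 2*(1 - 6*θ + 6*θ^2) - 4*s*(θ*(1-θ)*(1-2*θ)) + 3*s^2*(θ*(1-θ))^2
      - 2*s*(θ*(1-θ))*(1-2*θ)
      = 2 - (θ*(1-θ))*(12 + 6*s*(1-2*θ) - 3*s^2*(θ*(1-θ))) := by ring
  have hprod : -1 ≤ s*(1-2*θ) := by nlinarith
  have hss : s^2*(θ*(1-θ)) ≤ 1/4 := by nlinarith [sq_nonneg s, sq_nonneg (1-s), sq_nonneg (1-2*θ)]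
  have hfac : 0 ≤ 12 + 6*s*(1-2*θ) - 3*s^2*(θ*(1-θ)) := by linarith
  rw [hE, abs_le]
  constructor
  · -- E ≤ 4
    nlinarith [mul_nonneg (mul_nonneg hs0 hs0) (mul_nonneg hσ0 hσ0),
      mul_nonneg hs0 hσ0]
  · -- E ≥ 0
    nlinarith [mul_nonneg hσ0 hfac]

noncomputable def mkf (k : ℕ) (x t : ℝ) : ℝ :=
  -(t^2 * phiF (x/t - k)) / (4*x^2) + (t^3 * (sigF (x/t - k))^2) / (8*x^3)

noncomputable def Dmkf (k : ℕ) (x t : ℝ) : ℝ :=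
  -(2*t*phiF (x/t - k) - x*(1 - 6*(x/t - k) + 6*(x/t - k)^2)) / (4*x^2)
  + (3*t^2*(sigF (x/t - k))^2 - 2*x*t*(sigF (x/t - k))*(1 - 2*(x/t - k))) / (8*x^3)

lemma hasDerivAt_phiF (u : ℝ) : HasDerivAt phiF (1 - 6*u + 6*u^2) u := by
  have h1 : HasDerivAt (fun u:ℝ => u) 1 u := hasDerivAt_id u
  have h2 : HasDerivAt (fun u:ℝ => u^2) (2*u) u := by simpa using hasDerivAt_pow 2 u
  have h3 : HasDerivAt (fun u:ℝ => u^3) (3*u^2) u := by simpa using hasDerivAt_pow 3 u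
  have h := (h1.sub (h2.const_mul 3)).add (h3.const_mul 2)
  have hfun : phiF = fun u : ℝ => u - 3*u^2 + 2*u^3 := by
    funext y; simp only [phiF]; ring
  rw [hfun]
  convert h using 1
  · rfl
  · rfl
  · rfl
  ring

lemma hasDerivAt_sigF (u : ℝ) : HasDerivAt sigF (1 - 2*u) u := by
  have h1 : HasDerivAt (fun u:ℝ => u) 1 u := hasDerivAt_id u
  have h2 : HasDerivAt (fun u:ℝ => u^2) (2*u) u := by simpa using hasDerivAt_pow 2 u
  have h := h1.sub h2
  have hfun : sigF = fun u : ℝ => u - u^2 := by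
    funext y; simp only [sigF]; ring
  rw [hfun]
  exact h

lemma hasDerivAt_theta (k : ℕ) (x t : ℝ) (ht : t ≠ 0) :
    HasDerivAt (fun t => x/t - (k:ℝ)) (-(x/t^2)) t := by
  have h : HasDerivAt (fun t : ℝ => x * t⁻¹) (x * (-(t^2)⁻¹)) t :=
    (hasDerivAt_inv ht).const_mul x
  have hf : (fun t:ℝ => x/t) = fun t:ℝ => x * t⁻¹ := by funext y; rw [div_eq_mul_inv]
  have h2 : HasDerivAt (fun t : ℝ => x/t) (-(x/t^2)) t := by
    rw [hf]
    convert h using 1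
    ring
  exact h2.sub_const _

lemma hasDerivAt_mk (k : ℕ) (x t : ℝ) (ht : t ≠ 0) (hx : x ≠ 0) :
    HasDerivAt (mkf k x) (Dmkf k x t) t := by
  have hθ := hasDerivAt_theta k x t ht
  have hφ : HasDerivAt (fun t => phiF (x/t - k)) ((1 - 6*(x/t-k) + 6*(x/t-k)^2) * (-(x/t^2))) t :=
    (hasDerivAt_phiF (x/t - k)).comp (h₂ := phiF) t hθ
  have hσ : HasDerivAt (fun t => sigF (x/t - k)) ((1 - 2*(x/t-k)) * (-(x/t^2))) t :=
    (hasDerivAt_sigF (x/t - k)).comp (h₂ := sigF) t hθ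
  have ht2 : HasDerivAt (fun t:ℝ => t^2) (2*t) t := by simpa using hasDerivAt_pow 2 t
  have ht3 : HasDerivAt (fun t:ℝ => t^3) (3*t^2) t := by simpa using hasDerivAt_pow 3 t
  have h1 : HasDerivAt (fun t => t^2 * phiF (x/t - k))
      (2*t * phiF (x/t - k) + t^2 * ((1 - 6*(x/t-k) + 6*(x/t-k)^2) * (-(x/t^2)))) t :=
    ht2.mul hφ
  have h2 : HasDerivAt (fun t => t^3 * (sigF (x/t - k))^2)
      (3*t^2 * (sigF (x/t - k))^2
        + t^3 * (2 * sigF (x/t-k) ^ 1 * ((1 - 2*(x/t-k)) * (-(x/t^2))))) t :=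
    ht3.mul (hσ.pow 2)
  have h := ((h1.div_const (4*x^2)).neg).add (h2.div_const (8*x^3))
  have hfun : mkf k x = fun t => -(t^2 * phiF (x/t - k)) / (4*x^2)
      + (t^3 * (sigF (x/t - k))^2) / (8*x^3) := rfl
  rw [hfun]
  convert h using 1
  · rfl
  · rfl
  · funext y; simp only [Pi.add_apply, Pi.neg_apply]; ring
  · simp only [Dmkf, pow_one]
    set c := x/t - (k:ℝ) with hc
    set A := phiF c with hA
    set B := sigF c with hB
    field_simp [ht, hx]
    ring

lemma Dmk_bound (k : ℕ) (hk : 1 ≤ k) (x t : ℝ) (hx : 0 < x)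
    (ht1 : x/(k+1) ≤ t) (ht2 : t ≤ x/k) : |Dmkf k x t| ≤ 1/(4*x) := by
  have hk0 : (0:ℝ) < k := by exact_mod_cast hk
  have hkR : (1:ℝ) ≤ k := by exact_mod_cast hk
  have hk1 : (0:ℝ) < (k:ℝ)+1 := by linarith
  have ht0 : 0 < t := lt_of_lt_of_le (by positivity) ht1
  set θ : ℝ := x/t - k with hθdef
  have hθ0 : 0 ≤ θ := by
    have : (k:ℝ) ≤ x/t := by
      rw [le_div_iff₀ ht0]
      calc (k:ℝ)*t ≤ (k:ℝ)*(x/k) := by nlinarith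
        _ = x := by field_simp [ne_of_gt hk0]
    simp [hθdef]; linarith
  have hθ1 : θ ≤ 1 := by
    have : x/t ≤ (k:ℝ)+1 := by
      rw [div_le_iff₀ ht0]
      calc x = ((k:ℝ)+1)*(x/(k+1)) := by field_simp
        _ ≤ ((k:ℝ)+1)*t := by nlinarith
    simp [hθdef]; linarith
  have hs1 : t/x ≤ 1 := by
    rw [div_le_one hx]
    calc t ≤ x/k := ht2
      _ ≤ x := by
        rw [div_le_iff₀ hk0]
        nlinarith [mul_nonneg hx.le (sub_nonneg.mpr hkR)]
  have hs0 : 0 ≤ t/x := by positivity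
  have hDeq : Dmkf k x t = (2*(1 - 6*θ + 6*θ^2) - 4*(t/x)*(θ*(1-θ)*(1-2*θ))
      + 3*(t/x)^2*(θ*(1-θ))^2 - 2*(t/x)*(θ*(1-θ))*(1-2*θ)) / (8*x) := by
    simp only [Dmkf, phiF, sigF, hθdef]
    field_simp
    ring
  rw [hDeq, abs_div, abs_of_pos (by positivity : (0:ℝ) < 8*x)]
  rw [div_le_div_iff₀ (by positivity) (by positivity)]
  have := keyIneq (t/x) θ hs0 hs1 hθ0 hθ1
  calc |2*(1 - 6*θ + 6*θ^2) - 4*(t/x)*(θ*(1-θ)*(1-2*θ)) + 3*(t/x)^2*(θ*(1-θ))^2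
      - 2*(t/x)*(θ*(1-θ))*(1-2*θ)| * (4*x) ≤ 2 * (4*x) := by nlinarith [abs_nonneg (2*(1 - 6*θ + 6*θ^2) - 4*(t/x)*(θ*(1-θ)*(1-2*θ)) + 3*(t/x)^2*(θ*(1-θ))^2 - 2*(t/x)*(θ*(1-θ))*(1-2*θ))]
    _ = 1 * (8*x) := by ring

lemma piece_lip (k : ℕ) (hk : 1 ≤ k) (x : ℝ) (hx : 0 < x) {u v : ℝ}
    (hu : x/(k+1) ≤ u) (huv : u ≤ v) (hv : v ≤ x/k) :
    |mkf k x v - mkf k x u| ≤ (1/(4*x)) * (v - u) := by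
  have hset : Convex ℝ (Set.Icc (x/(k+1)) (x/k)) := convex_Icc _ _
  have hb : ∀ t ∈ Set.Icc (x/(k+1)) (x/k), HasDerivWithinAt (mkf k x) (Dmkf k x t)
      (Set.Icc (x/(k+1)) (x/k)) t := by
    intro t htm
    have ht0 : 0 < t := lt_of_lt_of_le (by positivity) htm.1
    exact (hasDerivAt_mk k x t ht0.ne' hx.ne').hasDerivWithinAt
  have hbound : ∀ t ∈ Set.Icc (x/(k+1)) (x/k), ‖Dmkf k x t‖ ≤ 1/(4*x) := by
    intro t htm
    rw [Real.norm_eq_abs]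
    exact Dmk_bound k hk x t hx htm.1 htm.2
  have := hset.norm_image_sub_le_of_norm_hasDerivWithin_le hb hbound
    (Set.mem_Icc.mpr ⟨hu, le_trans huv hv⟩) (Set.mem_Icc.mpr ⟨le_trans hu huv, hv⟩)
  rw [Real.norm_eq_abs, Real.norm_eq_abs, abs_of_nonneg (by linarith : (0:ℝ) ≤ v - u)] at this
  exact this

lemma piece_eq (k : ℕ) (hk : 1 ≤ k) (x t : ℝ) (hx : 0 < x) (ht1 : x/(k+1) ≤ t) (ht2 : t ≤ x/k) :
    Gf (x/t) = mkf k x t := by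
  have hk0 : (0:ℝ) < k := by exact_mod_cast hk
  have ht0 : 0 < t := lt_of_lt_of_le (by positivity) ht1
  have hyk : (k:ℝ) ≤ x/t := by
    rw [le_div_iff₀ ht0]
    calc (k:ℝ)*t ≤ (k:ℝ)*(x/k) := by nlinarith
      _ = x := by field_simp [ne_of_gt hk0]
  have hyk1 : x/t ≤ (k:ℝ)+1 := by
    rw [div_le_iff₀ ht0]
    calc x = ((k:ℝ)+1)*(x/(k+1)) := by field_simp
      _ ≤ ((k:ℝ)+1)*t := by nlinarith [lt_of_lt_of_le (by positivity : (0:ℝ) < x/(k+1)) ht1]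
  have hy0 : (0:ℝ) < x/t := by positivity
  rcases lt_or_eq_of_le hyk1 with hlt | heq
  · have hfl : ⌊x/t⌋₊ = k := floor_eq_on_piece hk hyk hlt
    simp only [Gf, mkf, hfl]
    field_simp
  · have hfl : ⌊x/t⌋₊ = k+1 := by
      rw [heq]
      exact_mod_cast Nat.floor_natCast (k+1)
    have harg : x/t - (⌊x/t⌋₊:ℝ) = 0 := by rw [hfl]; push_cast; linarith
    have harg2 : x/t - (k:ℝ) = 1 := by linarith
    simp only [Gf, mkf, harg, harg2, phiF, sigF]
    norm_num

lemma same_piece_bound (x : ℝ) (hx : 1 ≤ x) {u v : ℝ} (hu : 1 ≤ u) (huv : u ≤ v) (hv : v ≤ x)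
    (hfl : ⌊x/u⌋₊ = ⌊x/v⌋₊) :
    |Gf (x/v) - Gf (x/u)| ≤ (1/(4*x)) * (v - u) := by
  have hx0 : (0:ℝ) < x := by linarith
  have hu0 : (0:ℝ) < u := by linarith
  have hv0 : (0:ℝ) < v := by linarith
  set k := ⌊x/v⌋₊ with hkdef
  have hk1 : 1 ≤ k := by
    apply Nat.le_floor
    rw [le_div_iff₀ hv0]; push_cast; linarith
  have hk0 : (0:ℝ) < k := by exact_mod_cast hk1
  have hvk : v ≤ x/k := by
    rw [le_div_iff₀ hk0]
    have := Nat.floor_le (by positivity : (0:ℝ) ≤ x/v)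
    rw [← hkdef] at this
    calc v*(k:ℝ) ≤ v*(x/v) := by nlinarith
      _ = x := by field_simp
  have huk : x/(k+1) ≤ u := by
    have hlt : x/u < (k:ℝ)+1 := by
      have := Nat.lt_floor_add_one (x/u)
      rw [hfl] at this
      exact_mod_cast this
    rw [div_le_iff₀ (by positivity : (0:ℝ) < (k:ℝ)+1)]
    nlinarith [div_mul_cancel₀ x hu0.ne']
  rw [piece_eq k hk1 x v hx0 (le_trans huk huv) hvk,
    piece_eq k hk1 x u hx0 huk (le_trans huv hvk)]
  exact piece_lip k hk1 x hx0 huk huv hvk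

lemma glue_lip (x : ℝ) (hx : 1 ≤ x) : ∀ u v : ℝ, 1 ≤ u → u ≤ v → v ≤ x →
    |Gf (x/v) - Gf (x/u)| ≤ (1/(4*x)) * (v - u) := by
  have hx0 : (0:ℝ) < x := by linarith
  suffices H : ∀ d : ℕ, ∀ u v : ℝ, 1 ≤ u → u ≤ v → v ≤ x → ⌊x/u⌋₊ - ⌊x/v⌋₊ ≤ d →
      |Gf (x/v) - Gf (x/u)| ≤ (1/(4*x)) * (v - u) by
    exact fun u v h1 h2 h3 => H _ u v h1 h2 h3 le_rfl
  intro d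
  induction d with
  | zero =>
      intro u v hu huv hv hgap
      have hmono : ⌊x/v⌋₊ ≤ ⌊x/u⌋₊ := by
        apply Nat.floor_le_floor
        apply div_le_div_of_nonneg_left hx0.le (by linarith) huv
      exact same_piece_bound x hx hu huv hv (by omega)
  | succ d ih =>
      intro u v hu huv hv hgap
      have hu0 : (0:ℝ) < u := by linarith
      have hv0 : (0:ℝ) < v := by linarith
      have hmono : ⌊x/v⌋₊ ≤ ⌊x/u⌋₊ := by
        apply Nat.floor_le_floor
        apply div_le_div_of_nonneg_left hx0.le (by linarith) huv
      by_cases hcase : ⌊x/u⌋₊ = ⌊x/v⌋₊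
      · exact same_piece_bound x hx hu huv hv hcase
      · set k := ⌊x/v⌋₊ with hkdef
        have hk1 : 1 ≤ k := by
          apply Nat.le_floor
          rw [le_div_iff₀ hv0]; push_cast; linarith
        set w := x/((k:ℝ)+1) with hwdef
        have hw0 : (0:ℝ) < w := by positivity
        have huw : u ≤ w := by
          have hk1' : (k:ℕ)+1 ≤ ⌊x/u⌋₊ := by omega
          have : ((k:ℝ)+1) ≤ x/u := by
            have := (Nat.le_floor_iff (by positivity : (0:ℝ) ≤ x/u)).mp hk1'
            push_cast at this
            linarith
          rw [hwdef, le_div_iff₀ (by positivity : (0:ℝ) < (k:ℝ)+1)]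
          nlinarith [div_mul_cancel₀ x hu0.ne']
        have hwv : w ≤ v := by
          have hlt : x/v < (k:ℝ)+1 := by
            have := Nat.lt_floor_add_one (x/v)
            rw [← hkdef] at this
            exact_mod_cast this
          rw [hwdef, div_le_iff₀ (by positivity : (0:ℝ) < (k:ℝ)+1)]
          nlinarith [div_mul_cancel₀ x hv0.ne']
        have hfw : ⌊x/w⌋₊ = k+1 := by
          have : x/w = (k:ℝ)+1 := by
            rw [hwdef]; field_simp
          rw [this]
          have : ((k:ℝ)+1) = ((k+1:ℕ):ℝ) := by push_cast; ring
          rw [this]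
          exact Nat.floor_natCast (k+1)
        have hrec : |Gf (x/w) - Gf (x/u)| ≤ (1/(4*x)) * (w - u) := by
          apply ih u w hu huw (by linarith)
          rw [hfw]
          omega
        have hpiece : |Gf (x/v) - Gf (x/w)| ≤ (1/(4*x)) * (v - w) := by
          have hvk : v ≤ x/k := by
            rw [le_div_iff₀ (by exact_mod_cast hk1 : (0:ℝ) < (k:ℝ))]
            have := Nat.floor_le (by positivity : (0:ℝ) ≤ x/v)
            rw [← hkdef] at this
            calc v*(k:ℝ) ≤ v*(x/v) := by nlinarith
              _ = x := by field_simp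
          have hw1 : x/((k:ℝ)+1) ≤ w := le_of_eq hwdef.symm
          rw [piece_eq k hk1 x v hx0 (le_trans hw1 hwv) hvk,
            piece_eq k hk1 x w hx0 hw1 (le_trans hwv hvk)]
          exact piece_lip k hk1 x hx0 hw1 hwv hvk
        calc |Gf (x/v) - Gf (x/u)|
            ≤ |Gf (x/v) - Gf (x/w)| + |Gf (x/w) - Gf (x/u)| := by
              have := abs_sub_le (Gf (x/v)) (Gf (x/w)) (Gf (x/u))
              linarith [this]
          _ ≤ (1/(4*x)) * (v - w) + (1/(4*x)) * (w - u) := add_le_add hpiece hrec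
          _ = (1/(4*x)) * (v - u) := by ring

lemma Pq_bounds (u : ℝ) (h0 : 0 ≤ u) (h1 : u ≤ 1) : 0 ≤ Pq u ∧ Pq u ≤ 1 := by
  constructor
  · simp only [Pq]; nlinarith [sq_nonneg (1-u)]
  · simp only [Pq]; nlinarith [sq_nonneg u]

lemma Gf_one : Gf 1 = 0 := by
  simp [Gf, phiF, sigF]

/-- Balazard's inequality. -/
theorem stmt3 (X : ℝ) (hX : 1 ≤ X) :
    |mf X| ≤ |Mf X| / X + (1 / X ^ 2) * (∫ t in (1:ℝ)..X, |Mf t|) + 8 / (3 * X) := by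
  have hX0 : (0:ℝ) < X := by linarith
  set F := ⌊X⌋₊ with hFdef
  have hF1 : 1 ≤ F := Nat.le_floor (by exact_mod_cast hX)
  have hFle : (F:ℝ) ≤ X := Nat.floor_le (by linarith)
  have hFlt : X < (F:ℝ)+1 := Nat.lt_floor_add_one X
  set q : ℕ → ℝ := fun j => ∑ n ∈ Icc 1 j, (μ n : ℝ) with hqdef
  -- the three sum quantities
  set SN : ℝ := ∑ n ∈ Icc 1 F, (μ n : ℝ) * n with hSNdef
  set RR : ℝ := ∑ n ∈ Icc 1 F, (μ n : ℝ) * Gf (X/n) with hRRdef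
  -- integral of Mf
  have hIM : ∫ t in (1:ℝ)..X, Mf t = ∑ j ∈ Icc 1 (F-1), q j + (X - F) * q F := by
    have : (fun t => Mf t) = fun t => q ⌊t⌋₊ := rfl
    rw [this]
    exact stepIntegralUpTo q F hF1 X hFle (le_of_lt hFlt)
  have hIA : ∫ t in (1:ℝ)..X, |Mf t| = ∑ j ∈ Icc 1 (F-1), |q j| + (X - F) * |q F| := by
    have : (fun t => |Mf t|) = fun t => (fun j => |q j|) ⌊t⌋₊ := rfl
    rw [this]
    exact stepIntegralUpTo (fun j => |q j|) F hF1 X hFle (le_of_lt hFlt)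
  set IM : ℝ := ∫ t in (1:ℝ)..X, Mf t with hIMdef
  set IA : ℝ := ∫ t in (1:ℝ)..X, |Mf t| with hIAdef
  -- IA is nonneg, |IM| ≤ IA
  have hIA0 : 0 ≤ IA := by
    rw [hIA]
    apply add_nonneg (Finset.sum_nonneg (fun j _ => abs_nonneg _))
    apply mul_nonneg (by linarith) (abs_nonneg _)
  have hIMIA : |IM| ≤ IA := by
    rw [hIM, hIA]
    calc |∑ j ∈ Icc 1 (F-1), q j + (X - F) * q F|
        ≤ |∑ j ∈ Icc 1 (F-1), q j| + |(X - F) * q F| := abs_add_le _ _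
      _ ≤ ∑ j ∈ Icc 1 (F-1), |q j| + (X - F) * |q F| := by
          apply add_le_add (Finset.abs_sum_le_sum_abs _ _)
          rw [abs_mul, abs_of_nonneg (by linarith : (0:ℝ) ≤ X - F)]
  -- master identity
  have hXne : X ≠ 0 := hX0.ne'
  have hmaster : 3/8 * X * mf X - 1/2 * Mf X + 1/(8*X) * SN + RR = Pq (1/X) := by
    have hW := moebius_double F hF1 (fun k => Pq ((k:ℝ)/X))
    have hper : ∀ n ∈ Icc 1 F, (μ n:ℝ) * ∑ m ∈ Icc 1 (F/n), Pq ((((n*m:ℕ)):ℝ)/X)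
        = 3/8*X*((μ n:ℝ)/n) - 1/2*(μ n:ℝ) + 1/(8*X)*((μ n:ℝ)*n) + (μ n:ℝ)*Gf (X/n) := by
      intro n hn
      rw [Finset.mem_Icc] at hn
      have hn0 : (0:ℝ) < n := by exact_mod_cast hn.1
      have hnX : (n:ℝ) ≤ X := le_trans (by exact_mod_cast hn.2) hFle
      have hXn : 1 ≤ X/n := by rw [le_div_iff₀ hn0]; linarith
      have hargs : ∀ m ∈ Icc 1 (F/n), Pq ((((n*m:ℕ)):ℝ)/X) = Pq ((m:ℝ)/(X/n)) := by
        intro m _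
        congr 1
        push_cast
        field_simp
      have hfloor : F / n = ⌊X/(n:ℝ)⌋₊ := by rw [hFdef, ← Nat.floor_div_natCast X n]
      rw [Finset.sum_congr rfl hargs, hfloor, inner_sum_eq (X/n) hXn]
      field_simp
    rw [Finset.sum_congr rfl hper] at hW
    have hsplit : ∑ n ∈ Icc 1 F, (3/8*X*((μ n:ℝ)/n) - 1/2*(μ n:ℝ) + 1/(8*X)*((μ n:ℝ)*n)
          + (μ n:ℝ)*Gf (X/n))
        = 3/8*X*mf X - 1/2*Mf X + 1/(8*X)*SN + RR := by
      rw [Finset.sum_add_distrib, Finset.sum_add_distrib, Finset.sum_sub_distrib,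
        ← Finset.mul_sum, ← Finset.mul_sum, ← Finset.mul_sum]
      rfl
    rw [hsplit] at hW
    rw [hW]
    norm_num
  -- SN via integral
  have hSN : SN = X * Mf X - IM := by
    have habel := abel_discrete (fun n => (μ n:ℝ)) (fun n => X - (n:ℝ)) F hF1
    have hdiff : ∀ j ∈ Icc 1 (F-1), (∑ n ∈ Icc 1 j, (μ n:ℝ)) * ((X - (j:ℝ)) - (X - ((j+1:ℕ):ℝ)))
        = (∑ n ∈ Icc 1 j, (μ n:ℝ)) := by
      intro j _
      have : (X - (j:ℝ)) - (X - ((j+1:ℕ):ℝ)) = 1 := by push_cast; ring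
      rw [this, mul_one]
    rw [Finset.sum_congr rfl hdiff] at habel
    have hlhs : ∑ n ∈ Icc 1 F, (μ n:ℝ) * (X - (n:ℝ)) = X * Mf X - SN := by
      have hterm : ∀ n ∈ Icc 1 F, (μ n:ℝ) * (X - (n:ℝ)) = X*(μ n:ℝ) - (μ n:ℝ)*n := by
        intro n _; ring
      rw [Finset.sum_congr rfl hterm, Finset.sum_sub_distrib, ← Finset.mul_sum]
      rfl
    rw [hlhs] at habel
    have h5 : (∑ n ∈ Icc 1 F, (μ n:ℝ)) * (X - (F:ℝ)) = (X - (F:ℝ)) * q F := by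
      simp only [hqdef]; ring
    rw [h5] at habel
    rw [hIM]
    linarith [habel]
  -- remainder bound
  have hRR : |RR| ≤ 1/(4*X) * IA := by
    have habel := abel_discrete (fun n => (μ n:ℝ)) (fun n => Gf (X/(n:ℝ))) F hF1
    rw [hRRdef, habel]
    have hterm : ∀ j ∈ Icc 1 (F-1),
        |(∑ n ∈ Icc 1 j, (μ n:ℝ)) * (Gf (X/(j:ℝ)) - Gf (X/((j+1:ℕ):ℝ)))|
        ≤ |q j| * (1/(4*X)) := by
      intro j hj
      rw [Finset.mem_Icc] at hj
      have hj1 : (1:ℝ) ≤ (j:ℝ) := by exact_mod_cast hj.1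
      have hjX : ((j+1:ℕ):ℝ) ≤ X := by
        have : j + 1 ≤ F := by omega
        calc ((j+1:ℕ):ℝ) ≤ (F:ℝ) := by exact_mod_cast this
          _ ≤ X := hFle
      have hlip := glue_lip X hX (j:ℝ) ((j+1:ℕ):ℝ) hj1 (by push_cast; linarith) hjX
      rw [abs_mul]
      apply mul_le_mul_of_nonneg_left _ (abs_nonneg _)
      rw [abs_sub_comm]
      calc |Gf (X/((j+1:ℕ):ℝ)) - Gf (X/(j:ℝ))| ≤ (1/(4*X)) * (((j+1:ℕ):ℝ) - (j:ℝ)) := hlip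
        _ = 1/(4*X) := by push_cast; ring
    have hlast : |(∑ n ∈ Icc 1 F, (μ n:ℝ)) * Gf (X/(F:ℝ))| ≤ |q F| * (1/(4*X) * (X - F)) := by
      have hF1' : (1:ℝ) ≤ (F:ℝ) := by exact_mod_cast hF1
      have hlip := glue_lip X hX (F:ℝ) X hF1' hFle le_rfl
      rw [div_self hXne, Gf_one] at hlip
      rw [abs_mul]
      apply mul_le_mul_of_nonneg_left _ (abs_nonneg _)
      calc |Gf (X/(F:ℝ))| = |0 - Gf (X/(F:ℝ))| := by rw [zero_sub, abs_neg]
        _ ≤ 1/(4*X) * (X - F) := hlip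
    calc |∑ j ∈ Icc 1 (F-1), (∑ n ∈ Icc 1 j, (μ n:ℝ)) * (Gf (X/(j:ℝ)) - Gf (X/((j+1:ℕ):ℝ)))
          + (∑ n ∈ Icc 1 F, (μ n:ℝ)) * Gf (X/(F:ℝ))|
        ≤ |∑ j ∈ Icc 1 (F-1), (∑ n ∈ Icc 1 j, (μ n:ℝ)) * (Gf (X/(j:ℝ)) - Gf (X/((j+1:ℕ):ℝ)))|
          + |(∑ n ∈ Icc 1 F, (μ n:ℝ)) * Gf (X/(F:ℝ))| := abs_add_le _ _
      _ ≤ ∑ j ∈ Icc 1 (F-1), |q j| * (1/(4*X)) + |q F| * (1/(4*X) * (X - F)) := by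
          apply add_le_add _ hlast
          exact le_trans (Finset.abs_sum_le_sum_abs _ _) (Finset.sum_le_sum hterm)
      _ = 1/(4*X) * IA := by
          rw [hIA, ← Finset.sum_mul]
          ring
  -- Pq bound
  have hPq : 0 ≤ Pq (1/X) ∧ Pq (1/X) ≤ 1 :=
    Pq_bounds (1/X) (by positivity) (by rw [div_le_one hX0]; linarith)
  -- final
  have hmf : mf X = 8/(3*X) * Pq (1/X) + Mf X / X + IM/(3*X^2) - 8/(3*X) * RR := by
    have hXne : X ≠ 0 := hX0.ne'
    have h1 : 1/(8*X) * SN = 1/8 * Mf X - IM/(8*X) := by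
      rw [hSN]; field_simp
    have e1 : 3/8 * X * mf X = Pq (1/X) + 3/8 * Mf X + IM/(8*X) - RR := by linarith
    have e2 : mf X = (Pq (1/X) + 3/8 * Mf X + IM/(8*X) - RR) * (8/(3*X)) := by
      rw [← e1]; field_simp
    rw [e2]; field_simp
  rw [hmf]
  have habs : |8/(3*X) * Pq (1/X) + Mf X / X + IM/(3*X^2) - 8/(3*X) * RR|
      ≤ 8/(3*X) * Pq (1/X) + |Mf X| / X + |IM|/(3*X^2) + 8/(3*X) * |RR| := by
    have h1 : |8/(3*X) * Pq (1/X)| = 8/(3*X) * Pq (1/X) :=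
      abs_of_nonneg (mul_nonneg (by positivity) hPq.1)
    have h2 : |Mf X / X| = |Mf X| / X := by rw [abs_div, abs_of_pos hX0]
    have h3 : |IM/(3*X^2)| = |IM|/(3*X^2) := by
      rw [abs_div, abs_of_pos (by positivity : (0:ℝ) < 3*X^2)]
    have h4 : |8/(3*X) * RR| = 8/(3*X) * |RR| := by
      rw [abs_mul, abs_of_pos (by positivity : (0:ℝ) < 8/(3*X))]
    calc |8/(3*X) * Pq (1/X) + Mf X / X + IM/(3*X^2) - 8/(3*X) * RR|
        ≤ |8/(3*X) * Pq (1/X) + Mf X / X + IM/(3*X^2)| + |8/(3*X) * RR| := abs_sub _ _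
      _ ≤ |8/(3*X) * Pq (1/X) + Mf X / X| + |IM/(3*X^2)| + |8/(3*X) * RR| := by
          linarith [abs_add_le (8/(3*X) * Pq (1/X) + Mf X / X) (IM/(3*X^2))]
      _ ≤ |8/(3*X) * Pq (1/X)| + |Mf X / X| + |IM/(3*X^2)| + |8/(3*X) * RR| := by
          linarith [abs_add_le (8/(3*X) * Pq (1/X)) (Mf X / X)]
      _ = 8/(3*X) * Pq (1/X) + |Mf X| / X + |IM|/(3*X^2) + 8/(3*X) * |RR| := by
          rw [h1, h2, h3, h4]
  calc |8/(3*X) * Pq (1/X) + Mf X / X + IM/(3*X^2) - 8/(3*X) * RR|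
      ≤ 8/(3*X) * Pq (1/X) + |Mf X| / X + |IM|/(3*X^2) + 8/(3*X) * |RR| := habs
    _ ≤ 8/(3*X) * 1 + |Mf X| / X + IA/(3*X^2) + 8/(3*X) * (1/(4*X) * IA) := by
        gcongr
        exact hPq.2
    _ = |Mf X| / X + 1/X^2 * IA + 8/(3*X) := by
        field_simp
        ring
end

section
/- Let X, K, K₀ be real numbers with 0 < K < K₀ ≤ X. Assume X/K₀ ≥ 5·10⁶, log(K₀/K) ≤ 19000, and that for all t ≥ 438653 one has |∑_{n ≤ t} μ²(n) − (6/π²)·t| ≤ 0.02767·√t. Then ∑_{X/K₀ < n ≤ X/K} μ²(n)/√n ≤ (12/π²)·√(X/K). -/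
set_option maxHeartbeats 1000000
open Finset Real ArithmeticFunction MeasureTheory intervalIntegral
open scoped ArithmeticFunction.Moebius

theorem stmt8 (X K K₀ : ℝ) (hK : 0 < K) (hKK₀ : K < K₀) (hK₀X : K₀ ≤ X)
    (h1 : 5 * 10 ^ 6 ≤ X / K₀) (h2 : Real.log (K₀ / K) ≤ 19000)
    (hsq : ∀ t : ℝ, 438653 ≤ t →
      |(∑ n ∈ Finset.Icc 1 ⌊t⌋₊, ((μ n : ℝ)) ^ 2) - (6 / π ^ 2) * t|
        ≤ 0.02767 * Real.sqrt t) :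
    ∑ n ∈ Finset.Ioc ⌊X / K₀⌋₊ ⌊X / K⌋₊, ((μ n : ℝ)) ^ 2 / Real.sqrt n
      ≤ (12 / π ^ 2) * Real.sqrt (X / K) := by
  set a := X / K₀ with ha_def
  set b := X / K with hb_def
  set c : ℕ → ℝ := fun n => ((μ n : ℝ)) ^ 2 with hc_def
  have hK₀ : 0 < K₀ := hK.trans hKK₀
  have hX : 0 < X := lt_of_lt_of_le hK₀ hK₀X
  have ha0 : (0:ℝ) < a := div_pos hX hK₀
  have hab : a ≤ b := by
    apply div_le_div_of_nonneg_left hX.le hK hKK₀.le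
  have ha5 : (5 * 10 ^ 6 : ℝ) ≤ a := h1
  have hb0 : (0:ℝ) < b := ha0.trans_le hab
  -- Q₀ = Q
  have hQ0 : ∀ n : ℕ, ∑ k ∈ Icc 0 n, c k = ∑ k ∈ Icc 1 n, c k := by
    intro n
    have : Icc 0 n = insert 0 (Icc 1 n) := by
      ext x; simp [Finset.mem_Icc, Finset.mem_insert]; omega
    rw [this, Finset.sum_insert (by simp)]
    simp [hc_def]
  have hQnonneg : ∀ t : ℝ, 0 ≤ ∑ k ∈ Icc 0 ⌊t⌋₊, c k :=
    fun t => Finset.sum_nonneg fun i _ => sq_nonneg _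
  -- bounds from hsq
  have hQub : ∀ t : ℝ, 438653 ≤ t →
      ∑ k ∈ Icc 0 ⌊t⌋₊, c k ≤ 6 / π ^ 2 * t + 0.02767 * Real.sqrt t := by
    intro t ht
    have := abs_le.mp (hsq t ht)
    rw [hQ0]
    linarith [this.2]
  have hQlb : ∀ t : ℝ, 438653 ≤ t →
      6 / π ^ 2 * t - 0.02767 * Real.sqrt t ≤ ∑ k ∈ Icc 0 ⌊t⌋₊, c k := by
    intro t ht
    have := abs_le.mp (hsq t ht)
    rw [hQ0]
    linarith [this.1]
  have ha438 : (438653:ℝ) ≤ a := by linarith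
  -- the test function
  set f : ℝ → ℝ := fun t => t ^ (-(1/2) : ℝ) with hf_def
  have hderiv : ∀ t : ℝ, 0 < t → deriv f t = (-(1/2)) * t ^ (-(3/2) : ℝ) := by
    intro t ht
    have h := Real.hasDerivAt_rpow_const (x := t) (p := (-(1/2):ℝ)) (Or.inl ht.ne')
    have h2 : (-(1/2):ℝ) - 1 = -(3/2) := by norm_num
    rw [h2] at h
    exact h.deriv
  have hf_diff : ∀ t ∈ Set.Icc a b, DifferentiableAt ℝ f t := by
    intro t ht
    exact (Real.hasDerivAt_rpow_const (x := t) (p := (-(1/2):ℝ))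
      (Or.inl (ha0.trans_le ht.1).ne')).differentiableAt
  have hcont32 : ContinuousOn (fun t : ℝ => (-(1/2)) * t ^ (-(3/2) : ℝ)) (Set.Icc a b) := by
    apply continuousOn_const.mul
    apply ContinuousOn.rpow_const continuousOn_id
    intro x hx
    exact Or.inl (ha0.trans_le hx.1).ne'
  have hf_int : IntegrableOn (deriv f) (Set.Icc a b) := by
    apply (hcont32.integrableOn_Icc).congr_fun _ measurableSet_Icc
    intro t ht
    exact (hderiv t (ha0.trans_le ht.1)).symm
  have abel := sum_mul_eq_sub_sub_integral_mul c ha0.le hab hf_diff hf_int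
  -- rewrite the target sum
  have hsum_eq : ∑ n ∈ Finset.Ioc ⌊a⌋₊ ⌊b⌋₊, ((μ n : ℝ)) ^ 2 / Real.sqrt n
      = ∑ k ∈ Finset.Ioc ⌊a⌋₊ ⌊b⌋₊, f k * c k := by
    apply Finset.sum_congr rfl
    intro k hk
    have hk0 : 0 < k := by
      have := (Finset.mem_Ioc.mp hk).1
      have hfl : 1 ≤ ⌊a⌋₊ := Nat.one_le_iff_ne_zero.mpr (by
        have : (1:ℝ) ≤ a := by linarith
        have := Nat.le_floor (by exact_mod_cast this : (1:ℕ) ≤ a)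
        omega)
      omega
    have hkpos : (0:ℝ) < k := by exact_mod_cast hk0
    simp only [hf_def]
    rw [Real.rpow_neg hkpos.le, Real.sqrt_eq_rpow]
    ring
  rw [hsum_eq, abel]
  -- notation
  set Qb := ∑ k ∈ Icc 0 ⌊b⌋₊, c k with hQb_def
  set Qa := ∑ k ∈ Icc 0 ⌊a⌋₊, c k with hQa_def
  set sa := Real.sqrt a with hsa_def
  set sb := Real.sqrt b with hsb_def
  have hsa0 : 0 < sa := Real.sqrt_pos.mpr ha0
  have hsb0 : 0 < sb := Real.sqrt_pos.mpr hb0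
  have hsab : sa ≤ sb := Real.sqrt_le_sqrt hab
  have hsa2 : sa ^ 2 = a := Real.sq_sqrt ha0.le
  have hsb2 : sb ^ 2 = b := Real.sq_sqrt hb0.le
  have hfa : f a = sa⁻¹ := by
    simp only [hf_def]; rw [Real.rpow_neg ha0.le, hsa_def, Real.sqrt_eq_rpow]
  have hfb : f b = sb⁻¹ := by
    simp only [hf_def]; rw [Real.rpow_neg hb0.le, hsb_def, Real.sqrt_eq_rpow]
  -- bound the boundary terms
  have hT1 : f b * Qb ≤ 6 / π ^ 2 * sb + 0.02767 := by
    have h1' := hQub b (le_trans ha438 hab)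
    have hfb0 : 0 ≤ f b := by rw [hfb]; positivity
    calc f b * Qb ≤ f b * (6 / π ^ 2 * b + 0.02767 * sb) := by
          exact mul_le_mul_of_nonneg_left h1' hfb0
      _ = 6 / π ^ 2 * sb + 0.02767 := by
          rw [hfb, ← hsb2]; field_simp
  have hT2 : -(f a * Qa) ≤ -(6 / π ^ 2 * sa) + 0.02767 := by
    have h1' := hQlb a ha438
    have hfa0 : 0 ≤ f a := by rw [hfa]; positivity
    have : f a * (6 / π ^ 2 * a - 0.02767 * sa) ≤ f a * Qa :=
      mul_le_mul_of_nonneg_left h1' hfa0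
    have heq : f a * (6 / π ^ 2 * a - 0.02767 * sa) = 6 / π ^ 2 * sa - 0.02767 := by
      rw [hfa, ← hsa2]; field_simp
    linarith
  -- bound the integral term
  set I := ∫ t in Set.Ioc a b, deriv f t * (∑ k ∈ Icc 0 ⌊t⌋₊, c k) with hI_def
  set g : ℝ → ℝ := fun t => 3 / π ^ 2 * t ^ (-(1/2) : ℝ) + 0.02767 / 2 * t⁻¹ with hg_def
  have hg_cont : ContinuousOn g (Set.Icc a b) := by
    apply ContinuousOn.add
    · apply continuousOn_const.mul
      apply ContinuousOn.rpow_const continuousOn_id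
      intro x hx; exact Or.inl (ha0.trans_le hx.1).ne'
    · apply continuousOn_const.mul
      apply ContinuousOn.inv₀ continuousOn_id
      intro x hx; exact (ha0.trans_le hx.1).ne'
  have hg_int : IntegrableOn g (Set.Ioc a b) :=
    (hg_cont.integrableOn_Icc).mono_set Set.Ioc_subset_Icc_self
  have hIbound : -I ≤ ∫ t in Set.Ioc a b, g t := by
    have hnorm : ‖I‖ ≤ ∫ t in Set.Ioc a b, g t := by
      apply MeasureTheory.norm_integral_le_of_norm_le hg_int
      rw [ae_restrict_iff' measurableSet_Ioc]
      filter_upwards with t ht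
      have ht0 : 0 < t := ha0.trans ht.1
      have hst0 : 0 < Real.sqrt t := Real.sqrt_pos.mpr ht0
      have ht438 : (438653:ℝ) ≤ t := le_trans ha438 ht.1.le
      have hub := hQub t ht438
      have hqn := hQnonneg t
      rw [Real.norm_eq_abs, abs_mul, hderiv t ht0]
      have h32 : 0 < t ^ (-(3/2) : ℝ) := Real.rpow_pos_of_pos ht0 _
      rw [abs_of_nonneg hqn]
      have habs : |(-(1/2)) * t ^ (-(3/2) : ℝ)| = (1/2) * t ^ (-(3/2) : ℝ) := by
        rw [abs_mul, abs_of_pos h32]; norm_num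
      rw [habs]
      have key : (1/2) * t ^ (-(3/2) : ℝ) * (6 / π ^ 2 * t + 0.02767 * Real.sqrt t) = g t := by
        rw [hg_def]
        have e1 : t ^ (-(3/2) : ℝ) * t = t ^ (-(1/2) : ℝ) := by
          nth_rewrite 2 [← Real.rpow_one t]
          rw [← Real.rpow_add ht0]; norm_num
        have e2 : t ^ (-(3/2) : ℝ) * Real.sqrt t = t⁻¹ := by
          rw [Real.sqrt_eq_rpow, ← Real.rpow_add ht0, ← Real.rpow_neg_one t]
          norm_num
        simp only []
        calc (1/2) * t ^ (-(3/2) : ℝ) * (6 / π ^ 2 * t + 0.02767 * Real.sqrt t)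
            = 3 / π ^ 2 * (t ^ (-(3/2) : ℝ) * t)
              + 0.02767 / 2 * (t ^ (-(3/2) : ℝ) * Real.sqrt t) := by ring
          _ = _ := by rw [e1, e2]
      rw [← key]
      have h2' : 0 ≤ (1/2) * t ^ (-(3/2) : ℝ) := by positivity
      exact mul_le_mul_of_nonneg_left hub h2'
    calc -I ≤ ‖I‖ := by rw [Real.norm_eq_abs]; exact neg_le_abs I
      _ ≤ _ := hnorm
  -- compute the integral of g
  have hInt_g : ∫ t in Set.Ioc a b, g t
      = 6 / π ^ 2 * (sb - sa) + 0.02767 / 2 * (Real.log (K₀ / K)) := by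
    rw [← intervalIntegral.integral_of_le hab]
    have h0mem : (0:ℝ) ∉ Set.uIcc a b := by
      rw [Set.uIcc_of_le hab]
      intro h; exact absurd h.1 (not_le.mpr ha0)
    have i1 : IntervalIntegrable (fun t : ℝ => 3 / π ^ 2 * t ^ (-(1/2) : ℝ)) volume a b := by
      apply ContinuousOn.intervalIntegrable
      rw [Set.uIcc_of_le hab]
      apply continuousOn_const.mul
      apply ContinuousOn.rpow_const continuousOn_id
      intro x hx; exact Or.inl (ha0.trans_le hx.1).ne'
    have i2 : IntervalIntegrable (fun t : ℝ => 0.02767 / 2 * t⁻¹) volume a b := by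
      apply ContinuousOn.intervalIntegrable
      rw [Set.uIcc_of_le hab]
      apply continuousOn_const.mul
      apply ContinuousOn.inv₀ continuousOn_id
      intro x hx; exact (ha0.trans_le hx.1).ne'
    rw [hg_def]
    rw [intervalIntegral.integral_add i1 i2, intervalIntegral.integral_const_mul,
      intervalIntegral.integral_const_mul, integral_inv h0mem,
      integral_rpow (Or.inr ⟨by norm_num, h0mem⟩)]
    have e3 : b / a = K₀ / K := by
      rw [hb_def, ha_def]
      field_simp
    rw [e3]
    have e4 : (-(1/2) : ℝ) + 1 = 1/2 := by norm_num
    rw [e4]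
    rw [hsb_def, hsa_def, Real.sqrt_eq_rpow, Real.sqrt_eq_rpow]
    ring
  -- assemble
  have hL0 : 0 ≤ Real.log (K₀ / K) := by
    apply Real.log_nonneg
    rw [le_div_iff₀ hK]; linarith
  have hsa_lb : (2236:ℝ) ≤ sa := by
    rw [hsa_def]
    rw [show (2236:ℝ) = Real.sqrt (2236^2) by rw [Real.sqrt_sq]; norm_num]
    apply Real.sqrt_le_sqrt; nlinarith
  have hpi : π ≤ 4 := Real.pi_le_four
  have hpi0 : 0 < π := Real.pi_pos
  have hpi2 : π ^ 2 ≤ 16 := by nlinarith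
  have hfinal : 6 / π ^ 2 * sa ≥ 0.75 / 2 * sa := by
    have : (0.75:ℝ) / 2 ≤ 6 / π ^ 2 := by
      rw [div_le_div_iff₀ (by norm_num) (by positivity)]
      nlinarith
    nlinarith
  have hgoal : (12:ℝ) / π ^ 2 * sb = 6 / π ^ 2 * sb + 6 / π ^ 2 * sb := by ring
  have hI2 : -I ≤ 6 / π ^ 2 * (sb - sa) + 0.02767 / 2 * 19000 := by
    have := hIbound
    rw [hInt_g] at this
    nlinarith
  -- f b * Qb - f a * Qa - I ≤ goal
  have step : f b * Qb - f a * Qa - I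
      ≤ (6 / π ^ 2 * sb + 0.02767) + (-(6 / π ^ 2 * sa) + 0.02767)
        + (6 / π ^ 2 * (sb - sa) + 0.02767 / 2 * 19000) := by
    linarith
  have hrem : (0.02767:ℝ) + 0.02767 + 0.02767 / 2 * 19000 ≤ 6 / π ^ 2 * sa + 6 / π ^ 2 * sa := by
    nlinarith
  calc f b * Qb - f a * Qa - I ≤ _ := step
    _ ≤ 12 / π ^ 2 * sb := by nlinarith
end

section
/- Suppose that |M(t)| ≤ √t for all 1 ≤ t ≤ 10¹⁶, where M(t) = ∑_{n ≤ t} μ(n). Then for every real X with 4·10⁷ ≤ X ≤ 10¹⁶, |∑_{n ≤ X} μ(n)·(log n)²| ≤ (log X + 4)·√X·log X. -/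
open Finset Real ArithmeticFunction
open scoped ArithmeticFunction.Moebius

-- key: log b ≤ √b - (√b)⁻¹ for 1 ≤ b
lemma log_le_sqrt_sub (b : ℝ) (hb : 1 ≤ b) :
    Real.log b ≤ Real.sqrt b - (Real.sqrt b)⁻¹ := by
  have hb0 : (0:ℝ) < b := by linarith
  have hs0 : 0 < Real.sqrt b := Real.sqrt_pos.2 hb0
  have hlog : Real.log b = 2 * Real.log (Real.sqrt b) := by
    nth_rewrite 1 [← Real.mul_self_sqrt hb0.le]
    rw [Real.log_mul hs0.ne' hs0.ne']; ring
  have h1 : (1:ℝ) ≤ Real.sqrt b := by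
    rw [show (1:ℝ) = Real.sqrt 1 by simp]; exact Real.sqrt_le_sqrt hb
  have hx : 0 ≤ Real.log (Real.sqrt b) := Real.log_nonneg h1
  have hsinh : Real.log (Real.sqrt b) ≤ Real.sinh (Real.log (Real.sqrt b)) := by
    rcases eq_or_lt_of_le hx with h | h
    · simp [← h]
    · exact (Real.self_lt_sinh_iff.2 h).le
  rw [Real.sinh_log hs0] at hsinh
  rw [hlog]; linarith

lemma log_diff_le (i : ℕ) (hi : 1 ≤ i) :
    Real.log (i+1) - Real.log i ≤ 1 / (Real.sqrt i * Real.sqrt (i+1)) := by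
  have hi1 : (1:ℝ) ≤ (i:ℝ) := by exact_mod_cast hi
  set s := Real.sqrt i with hsdef
  set t := Real.sqrt ((i:ℝ)+1) with htdef
  have hs : 0 < s := Real.sqrt_pos.2 (by linarith)
  have ht : 0 < t := Real.sqrt_pos.2 (by linarith)
  have hs2 : s^2 = (i:ℝ) := Real.sq_sqrt (by linarith)
  have ht2 : t^2 = (i:ℝ)+1 := Real.sq_sqrt (by linarith)
  have hb : (1:ℝ) ≤ ((i:ℝ)+1)/i := by rw [le_div_iff₀ (by linarith)]; linarith
  have hsb : Real.sqrt (((i:ℝ)+1)/i) = t/s := by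
    rw [Real.sqrt_div (by linarith) (i:ℝ)]
  have h1 : Real.log ((i:ℝ)+1) - Real.log i = Real.log (((i:ℝ)+1)/i) := by
    rw [Real.log_div (by linarith) (by linarith)]
  rw [h1]
  have h2 := log_le_sqrt_sub _ hb
  rw [hsb] at h2
  have h3 : t/s - (t/s)⁻¹ = 1/(s*t) := by
    rw [inv_div]
    field_simp
    nlinarith [hs2, ht2]
  rw [h3] at h2
  exact h2

lemma term_bound (i : ℕ) (hi : 1 ≤ i) :
    Real.sqrt i * ((Real.log (i+1))^2 - (Real.log i)^2)
      ≤ 2 * Real.log (i+1) / Real.sqrt (i+1) := by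
  have hi1 : (1:ℝ) ≤ (i:ℝ) := by exact_mod_cast hi
  set s := Real.sqrt i with hsdef
  set t := Real.sqrt ((i:ℝ)+1) with htdef
  have hs : 0 < s := Real.sqrt_pos.2 (by linarith)
  have ht : 0 < t := Real.sqrt_pos.2 (by linarith)
  have hL1 : 0 ≤ Real.log i := Real.log_nonneg hi1
  have hL12 : Real.log i ≤ Real.log ((i:ℝ)+1) := Real.log_le_log (by linarith) (by linarith)
  have hd := log_diff_le i hi
  have hfac : (Real.log ((i:ℝ)+1))^2 - (Real.log i)^2
      = (Real.log ((i:ℝ)+1) + Real.log i) * (Real.log ((i:ℝ)+1) - Real.log i) := by ring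
  have hmul : (Real.log ((i:ℝ)+1) + Real.log i) * (Real.log ((i:ℝ)+1) - Real.log i)
      ≤ (2 * Real.log ((i:ℝ)+1)) * (1/(s*t)) := by
    apply mul_le_mul (by linarith) hd (by linarith) (by linarith)
  rw [hfac]
  calc s * ((Real.log ((i:ℝ)+1) + Real.log i) * (Real.log ((i:ℝ)+1) - Real.log i))
      ≤ s * ((2 * Real.log ((i:ℝ)+1)) * (1/(s*t))) := by
        apply mul_le_mul_of_nonneg_left hmul hs.le
    _ = 2 * Real.log ((i:ℝ)+1) / t := by field_simp

lemma tail_sum_bound (N : ℕ) :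
    ∑ i ∈ Finset.range N, 2 * Real.log (i+1) / Real.sqrt (i+1)
      ≤ 4 * Real.sqrt N * Real.log N := by
  induction N with
  | zero => simp
  | succ n ih =>
    rw [Finset.sum_range_succ]
    set s := Real.sqrt n with hsdef
    set t := Real.sqrt ((n:ℝ)+1) with htdef
    have hs : 0 ≤ s := Real.sqrt_nonneg _
    have ht : 0 < t := Real.sqrt_pos.2 (by positivity)
    have hs2 : s^2 = (n:ℝ) := Real.sq_sqrt (by positivity)
    have ht2 : t^2 = (n:ℝ)+1 := Real.sq_sqrt (by positivity)
    have hL : 0 ≤ Real.log ((n:ℝ)+1) :=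
      Real.log_nonneg (by linarith [Nat.cast_nonneg (α := ℝ) n])
    have hL0 : Real.log (n:ℝ) ≤ Real.log ((n:ℝ)+1) := by
      rcases Nat.eq_zero_or_pos n with h | h
      · simp [h]
      · exact Real.log_le_log (by exact_mod_cast h) (by linarith)
    have hL00 : 0 ≤ Real.log (n:ℝ) := by
      rcases Nat.eq_zero_or_pos n with h | h
      · simp [h]
      · exact Real.log_nonneg (by exact_mod_cast h)
    have hcast : ((n+1 : ℕ):ℝ) = (n:ℝ)+1 := by push_cast; ring
    rw [hcast]
    have key : 2 * Real.log ((n:ℝ)+1) / t ≤ 4 * Real.log ((n:ℝ)+1) * (t - s) := by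
      rw [div_le_iff₀ ht]
      nlinarith [mul_nonneg hL (sq_nonneg (s - t))]
    have ihs : ∑ i ∈ Finset.range n, 2 * Real.log (i+1) / Real.sqrt (i+1)
        ≤ 4 * s * Real.log ((n:ℝ)+1) := le_trans ih (by nlinarith)
    nlinarith

theorem stmt10
    (hM : ∀ t : ℝ, 1 ≤ t → t ≤ 10 ^ 16 → |Mf t| ≤ Real.sqrt t) :
    ∀ X : ℝ, 4 * 10 ^ 7 ≤ X → X ≤ 10 ^ 16 →
      |∑ n ∈ Finset.Icc 1 ⌊X⌋₊, (μ n : ℝ) * (Real.log n) ^ 2|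
        ≤ (Real.log X + 4) * Real.sqrt X * Real.log X := by
  intro X hX1 hX2
  set N := ⌊X⌋₊ with hNdef
  have hXpos : (0:ℝ) < X := by linarith
  have hN1 : 1 ≤ N := Nat.le_floor (by norm_num; linarith)
  have hNX : (N:ℝ) ≤ X := Nat.floor_le hXpos.le
  have hN1R : (1:ℝ) ≤ (N:ℝ) := by exact_mod_cast hN1
  have hN16 : (N:ℝ) ≤ 10 ^ 16 := hNX.trans hX2
  -- convert sum to range form
  have h0 : ∑ n ∈ Finset.Icc 1 N, (μ n:ℝ) * (Real.log n)^2
      = ∑ i ∈ Finset.range (N+1), (Real.log i)^2 * ((μ i : ℤ):ℝ) := by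
    rw [Finset.range_eq_Ico, Finset.sum_eq_sum_Ico_succ_bot (Nat.succ_pos N),
      Nat.succ_eq_add_one, Finset.Ico_add_one_right_eq_Icc]
    simp [mul_comm]
  -- partial sums equal Mf
  have hG : ∀ m : ℕ, ∑ i ∈ Finset.range (m+1), ((μ i : ℤ):ℝ) = Mf m := by
    intro m
    rw [Mf, Nat.floor_natCast, Finset.range_eq_Ico,
      Finset.sum_eq_sum_Ico_succ_bot (Nat.succ_pos m), Nat.succ_eq_add_one, Finset.Ico_add_one_right_eq_Icc]
    simp
  have habel := Finset.sum_range_by_parts (M := ℝ)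
    (fun i : ℕ => (Real.log i)^2) (fun i : ℕ => ((μ i : ℤ):ℝ)) (N+1)
  simp only [smul_eq_mul, Nat.add_sub_cancel] at habel
  rw [h0, habel, hG N]
  -- bound the head term
  have hb1 : |(Real.log N)^2 * Mf N| ≤ (Real.log N)^2 * Real.sqrt N := by
    rw [abs_mul, abs_of_nonneg (sq_nonneg (Real.log N))]
    exact mul_le_mul_of_nonneg_left (hM N hN1R hN16) (sq_nonneg _)
  -- bound the tail sum
  have hb2 : |∑ i ∈ Finset.range N,
        ((Real.log ((i+1 : ℕ) : ℝ))^2 - (Real.log i)^2) * (∑ j ∈ Finset.range (i+1), ((μ j : ℤ):ℝ))|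
      ≤ 4 * Real.sqrt N * Real.log N := by
    refine le_trans (le_trans (Finset.abs_sum_le_sum_abs _ _) (Finset.sum_le_sum ?_))
      (tail_sum_bound N)
    intro i hi
    rw [hG i]
    have hiN : i < N := Finset.mem_range.1 hi
    push_cast
    rcases Nat.eq_zero_or_pos i with h | h
    · subst h; simp [Mf]
    · have hi1 : (1:ℝ) ≤ (i:ℝ) := by exact_mod_cast h
      have hMi : |Mf i| ≤ Real.sqrt i := by
        refine hM i hi1 ?_
        have : (i:ℝ) ≤ (N:ℝ) := by exact_mod_cast hiN.le
        linarith
      have hL12 : Real.log i ≤ Real.log ((i:ℝ)+1) := Real.log_le_log (by linarith) (by linarith)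
      have hL1 : 0 ≤ Real.log i := Real.log_nonneg hi1
      have hΔ : 0 ≤ (Real.log ((i:ℝ)+1))^2 - (Real.log i)^2 := by nlinarith
      rw [abs_mul, abs_of_nonneg hΔ]
      calc ((Real.log ((i:ℝ)+1))^2 - (Real.log i)^2) * |Mf i|
          ≤ ((Real.log ((i:ℝ)+1))^2 - (Real.log i)^2) * Real.sqrt i :=
            mul_le_mul_of_nonneg_left hMi hΔ
        _ = Real.sqrt i * ((Real.log ((i:ℝ)+1))^2 - (Real.log i)^2) := by ring
        _ ≤ 2 * Real.log ((i:ℝ)+1) / Real.sqrt ((i:ℝ)+1) := term_bound i h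
  -- combine
  have htri : |(Real.log N)^2 * Mf N - ∑ i ∈ Finset.range N,
        ((Real.log ((i+1 : ℕ) : ℝ))^2 - (Real.log i)^2) * (∑ j ∈ Finset.range (i+1), ((μ j : ℤ):ℝ))|
      ≤ (Real.log N)^2 * Real.sqrt N + 4 * Real.sqrt N * Real.log N := by
    refine le_trans ?_ (add_le_add hb1 hb2)
    rw [sub_eq_add_neg]
    exact le_trans (abs_add_le _ _) (by rw [abs_neg])
  refine le_trans htri ?_
  have e1 : Real.log N ≤ Real.log X := Real.log_le_log (by linarith) hNX
  have e2 : 0 ≤ Real.log (N:ℝ) := Real.log_nonneg hN1R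
  have e3 : Real.sqrt N ≤ Real.sqrt X := Real.sqrt_le_sqrt hNX
  have e4 : 0 ≤ Real.sqrt (N:ℝ) := Real.sqrt_nonneg _
  have e5 : 0 ≤ Real.log X := e2.trans e1
  have p1 : (Real.log (N:ℝ))^2 ≤ (Real.log X)^2 := by nlinarith
  have p2 : (Real.log (N:ℝ))^2 * Real.sqrt N ≤ (Real.log X)^2 * Real.sqrt X :=
    mul_le_mul p1 e3 e4 (sq_nonneg _)
  have p3 : Real.sqrt (N:ℝ) * Real.log N ≤ Real.sqrt X * Real.log X :=
    mul_le_mul e3 e1 e2 (Real.sqrt_nonneg X)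
  nlinarith
end

section
/- Assume |R(t)| ≤ 0.0065·t/log t for t ≥ 1514928, and that ∑_{n ≤ √X} Λ(n)/(n·log(X/n)) ≤ 1.04·log(log X/log √X) + 1.04/log X for X ≥ 1. Then for all X ≥ 2·10¹⁹, |R₄(X)| ≤ 0.0049·X, where R₄(X) = ∑_{n ≤ √X} Λ(n)·R(X/n). -/
open Finset Real ArithmeticFunction

noncomputable def psi (X : ℝ) : ℝ := ∑ n ∈ Finset.Icc 1 ⌊X⌋₊, Λ n

noncomputable def Rf (X : ℝ) : ℝ := psi X - X

noncomputable def R4 (X : ℝ) : ℝ :=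
  ∑ n ∈ Finset.Icc 1 ⌊Real.sqrt X⌋₊, Λ n * Rf (X / n)

theorem stmt13
    (hR : ∀ t : ℝ, 1514928 ≤ t → |Rf t| ≤ 0.0065 * t / Real.log t)
    (hsum : ∀ X : ℝ, 1 ≤ X →
      ∑ n ∈ Finset.Icc 1 ⌊Real.sqrt X⌋₊, Λ n / (n * Real.log (X / n))
        ≤ 1.04 * Real.log (Real.log X / Real.log (Real.sqrt X))
          + 1.04 / Real.log X) :
    ∀ X : ℝ, 2 * 10 ^ 19 ≤ X → |R4 X| ≤ 0.0049 * X := by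
  intro X hX
  have hX0 : (0:ℝ) < X := by linarith
  have hX1 : (1:ℝ) ≤ X := by linarith
  -- sqrt X ≥ 1514928
  have hs1514 : (1514928:ℝ) ≤ Real.sqrt X := by
    rw [show (1514928:ℝ) = Real.sqrt (1514928^2) by
      rw [Real.sqrt_sq (by norm_num)]]
    exact Real.sqrt_le_sqrt (by norm_num; linarith)
  -- log X ≥ 44
  have hlog2lt : Real.log 2 < 0.6931471808 := Real.log_two_lt_d9
  have hlog2gt : (0.6931471803:ℝ) < Real.log 2 := Real.log_two_gt_d9
  have hlogX : (44:ℝ) ≤ Real.log X := by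
    have h64 : ((2:ℝ)^64) ≤ X := by norm_num; linarith
    have := Real.log_le_log (by positivity) h64
    rw [Real.log_pow] at this
    push_cast at this
    nlinarith
  have hlogXne : Real.log X ≠ 0 := by positivity
  -- termwise bound
  have hterm : ∀ n ∈ Finset.Icc 1 ⌊Real.sqrt X⌋₊,
      Λ n * |Rf (X / n)| ≤ 0.0065 * X * (Λ n / (n * Real.log (X / n))) := by
    intro n hn
    obtain ⟨hn1, hn2⟩ := Finset.mem_Icc.mp hn
    have hn0 : (0:ℝ) < n := by exact_mod_cast hn1
    have hns : (n:ℝ) ≤ Real.sqrt X :=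
      le_trans (Nat.cast_le.mpr hn2) (Nat.floor_le (Real.sqrt_nonneg X))
    have hXn : Real.sqrt X ≤ X / n := by
      rw [← Real.div_sqrt]
      gcongr
    have ht : (1514928:ℝ) ≤ X / n := le_trans hs1514 hXn
    have hlogt : (0:ℝ) < Real.log (X / n) := Real.log_pos (by linarith)
    have h1 := hR (X / n) ht
    calc Λ n * |Rf (X / n)| ≤ Λ n * (0.0065 * (X / n) / Real.log (X / n)) := by
          exact mul_le_mul_of_nonneg_left h1 vonMangoldt_nonneg
      _ = 0.0065 * X * (Λ n / (n * Real.log (X / n))) := by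
          field_simp
  -- sum bounds
  have h2 : |R4 X| ≤ ∑ n ∈ Finset.Icc 1 ⌊Real.sqrt X⌋₊, Λ n * |Rf (X / n)| := by
    refine le_trans (Finset.abs_sum_le_sum_abs _ _) (Finset.sum_le_sum ?_)
    intro n _
    rw [abs_mul, abs_of_nonneg vonMangoldt_nonneg]
  have h3 : |R4 X| ≤ 0.0065 * X *
      ∑ n ∈ Finset.Icc 1 ⌊Real.sqrt X⌋₊, Λ n / (n * Real.log (X / n)) := by
    rw [Finset.mul_sum]
    exact le_trans h2 (Finset.sum_le_sum hterm)
  have h4 := hsum X hX1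
  -- simplify log(log X / log sqrt X) = log 2
  have hlogsqrt : Real.log (Real.sqrt X) = Real.log X / 2 := Real.log_sqrt hX0.le
  have h5 : Real.log X / Real.log (Real.sqrt X) = 2 := by
    rw [hlogsqrt]; field_simp
  rw [h5] at h4
  have h6 : 1.04 / Real.log X ≤ 1.04 / 44 := by
    apply div_le_div_of_nonneg_left (by norm_num) (by norm_num) hlogX
  have h7 : 0.0065 * X * (1.04 * Real.log 2 + 1.04 / Real.log X) ≤ 0.0049 * X := by
    nlinarith
  have h8 : 0.0065 * X *
      (∑ n ∈ Finset.Icc 1 ⌊Real.sqrt X⌋₊, Λ n / (n * Real.log (X / n)))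
      ≤ 0.0065 * X * (1.04 * Real.log 2 + 1.04 / Real.log X) := by
    apply mul_le_mul_of_nonneg_left h4 (by positivity)
  linarith
end

section
/- Suppose |M(t)| ≤ (0.006688·log t − 0.039)·t/(log t)² for all t ≥ T with T = 1798118, that ∫₁^T |M(t)| dt ≤ 216378740, and that Balazard's inequality |m(X)| ≤ |M(X)|/X + (1/X²)∫₁^X |M(t)| dt + 8/(3X) holds. Then for all X ≥ 10¹⁴, |m(X)| ≤ (0.010032·log X − 0.0568)/(log X)². -/
open Finset Real ArithmeticFunction
open scoped ArithmeticFunction.Moebius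

lemma abs_Mf_le (t : ℝ) : |Mf t| ≤ (⌊t⌋₊ : ℝ) := by
  unfold Mf
  calc |∑ n ∈ Finset.Icc 1 ⌊t⌋₊, (μ n : ℝ)|
      ≤ ∑ n ∈ Finset.Icc 1 ⌊t⌋₊, |(μ n : ℝ)| := Finset.abs_sum_le_sum_abs _ _
    _ ≤ ∑ _n ∈ Finset.Icc 1 ⌊t⌋₊, (1 : ℝ) := by
        refine Finset.sum_le_sum fun n _ => ?_
        rw [← Int.cast_abs, ArithmeticFunction.abs_moebius]
        split_ifs <;> norm_num
    _ = (⌊t⌋₊ : ℝ) := by simp [Nat.card_Icc]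

lemma measurable_Mf : Measurable Mf :=
  (measurable_from_nat (f := fun n : ℕ => ∑ k ∈ Finset.Icc 1 n, ((μ k : ℤ) : ℝ))).comp
    Nat.measurable_floor

lemma intInt_absMf (a b : ℝ) :
    IntervalIntegrable (fun t => |Mf t|) MeasureTheory.volume a b := by
  rw [intervalIntegrable_iff]
  apply MeasureTheory.Measure.integrableOn_of_bounded (M := (⌊max a b⌋₊ : ℝ))
  · rw [Set.uIoc]
    exact (measure_Ioc_lt_top).ne
  · exact measurable_Mf.abs.aestronglyMeasurable
  · refine MeasureTheory.ae_restrict_of_forall_mem measurableSet_uIoc fun t ht => ?_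
    rw [Real.norm_eq_abs, abs_abs]
    exact (abs_Mf_le t).trans (by exact_mod_cast Nat.floor_mono ht.2)

/-- antiderivative -/
noncomputable def Ff (t : ℝ) : ℝ :=
  0.003344 * t ^ 2 / Real.log t - 0.017828 * t ^ 2 / (Real.log t) ^ 2

noncomputable def Ff' (t : ℝ) : ℝ :=
  0.006688 * t / Real.log t - 0.039 * t / (Real.log t) ^ 2
    + 0.035656 * t / (Real.log t) ^ 3

lemma hasDerivAt_Ff {t : ℝ} (ht : 1 < t) : HasDerivAt Ff (Ff' t) t := by
  have ht0 : (0:ℝ) < t := lt_trans zero_lt_one ht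
  have hl : Real.log t ≠ 0 := ne_of_gt (Real.log_pos ht)
  have hpow : HasDerivAt (fun t : ℝ => t ^ 2) (2 * t) t := by
    simpa using hasDerivAt_pow 2 t
  have hlog := Real.hasDerivAt_log (ne_of_gt ht0)
  have hA := ((hpow.const_mul (0.003344 : ℝ)).div hlog hl)
  have hB := ((hpow.const_mul (0.017828 : ℝ)).div (hlog.pow 2) (pow_ne_zero 2 hl))
  have := hA.sub hB
  refine this.congr_deriv ?_
  unfold Ff'
  simp only [Pi.pow_apply]
  field_simp
  ring

lemma intInt_Ff' {a b : ℝ} (ha : 1 < a) (hab : a ≤ b) :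
    IntervalIntegrable Ff' MeasureTheory.volume a b := by
  apply ContinuousOn.intervalIntegrable
  have hsub : Set.uIcc a b ⊆ Set.Ici a := by
    rw [Set.uIcc_of_le hab]; exact Set.Icc_subset_Ici_self
  have hne : ∀ t ∈ Set.uIcc a b, Real.log t ≠ 0 := fun t ht =>
    ne_of_gt (Real.log_pos (lt_of_lt_of_le ha (hsub ht)))
  have hlogC : ContinuousOn Real.log (Set.uIcc a b) :=
    Real.continuousOn_log.mono fun t ht => by
      simp only [Set.mem_compl_iff, Set.mem_singleton_iff]
      have := lt_of_lt_of_le ha (hsub ht); intro h; rw [h] at this; linarith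
  unfold Ff'
  exact (((continuousOn_const.mul continuousOn_id).div hlogC hne).sub
      ((continuousOn_const.mul continuousOn_id).div (hlogC.pow 2)
        (fun t ht => pow_ne_zero 2 (hne t ht)))).add
    ((continuousOn_const.mul continuousOn_id).div (hlogC.pow 3)
      (fun t ht => pow_ne_zero 3 (hne t ht)))

set_option maxHeartbeats 1000000 in
theorem stmt18
    (h1 : ∀ t : ℝ, (1798118 : ℝ) ≤ t →
      |Mf t| ≤ (0.006688 * Real.log t - 0.039) * t / (Real.log t) ^ 2)
    (h2 : (∫ t in (1:ℝ)..(1798118 : ℝ), |Mf t|) ≤ 216378740)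
    (hBalazard : ∀ X : ℝ, 1 ≤ X →
      |mf X| ≤ |Mf X| / X + (1 / X ^ 2) * (∫ t in (1:ℝ)..X, |Mf t|) + 8 / (3 * X)) :
    ∀ X : ℝ, 10 ^ 14 ≤ X →
      |mf X| ≤ (0.010032 * Real.log X - 0.0568) / (Real.log X) ^ 2 := by
  intro X hX
  set T : ℝ := 1798118 with hT
  have hT1 : (1:ℝ) < T := by norm_num
  have hTX : T ≤ X := by norm_num at hX ⊢; linarith
  have hX0 : (0:ℝ) < X := by linarith
  have hX1 : (1:ℝ) ≤ X := by linarith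
  set L := Real.log X with hLdef
  -- lower bound on L
  have hL31 : (31:ℝ) ≤ L := by
    have h2X : (2:ℝ) ^ 46 ≤ X := by norm_num at hX ⊢; linarith
    have : (46:ℝ) * Real.log 2 ≤ L := by
      rw [hLdef, show (46:ℝ) * Real.log 2 = Real.log (2 ^ 46) by
        rw [Real.log_pow]; push_cast; ring]
      exact Real.log_le_log (by positivity) h2X
    nlinarith [Real.log_two_gt_d9]
  have hL0 : (0:ℝ) < L := by linarith
  -- integral bound on [T, X]
  have hFT : HasDerivAt Ff (Ff' T) T := hasDerivAt_Ff hT1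
  have hIntFf' : IntervalIntegrable Ff' MeasureTheory.volume T X := intInt_Ff' hT1 hTX
  have hFTC : (∫ t in T..X, Ff' t) = Ff X - Ff T := by
    apply intervalIntegral.integral_eq_sub_of_hasDerivAt
    · intro t ht
      rw [Set.uIcc_of_le hTX] at ht
      exact hasDerivAt_Ff (lt_of_lt_of_le hT1 ht.1)
    · exact hIntFf'
  have hmono : (∫ t in T..X, |Mf t|) ≤ ∫ t in T..X, Ff' t := by
    apply intervalIntegral.integral_mono_on hTX (intInt_absMf T X) hIntFf'
    intro t ht
    have htT : T ≤ t := ht.1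
    have ht1 : (1:ℝ) < t := lt_of_lt_of_le hT1 htT
    have hlt : (0:ℝ) < Real.log t := Real.log_pos ht1
    have := h1 t htT
    refine this.trans ?_
    have heq : (0.006688 * Real.log t - 0.039) * t / (Real.log t) ^ 2
        = 0.006688 * t / Real.log t - 0.039 * t / (Real.log t) ^ 2 := by
      field_simp
    rw [heq]
    unfold Ff'
    have h3 : 0 ≤ 0.035656 * t / (Real.log t) ^ 3 := by positivity
    linarith
  -- split the integral
  have hsplit : (∫ t in (1:ℝ)..X, |Mf t|)
      = (∫ t in (1:ℝ)..T, |Mf t|) + ∫ t in T..X, |Mf t| :=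
    (intervalIntegral.integral_add_adjacent_intervals (intInt_absMf 1 T)
      (intInt_absMf T X)).symm
  -- F T ≥ 0
  have hlogT : (13:ℝ) ≤ Real.log T := by
    have h2T : (2:ℝ) ^ 20 ≤ T := by norm_num
    have : (20:ℝ) * Real.log 2 ≤ Real.log T := by
      rw [show (20:ℝ) * Real.log 2 = Real.log (2 ^ 20) by
        rw [Real.log_pow]; push_cast; ring]
      exact Real.log_le_log (by positivity) h2T
    nlinarith [Real.log_two_gt_d9]
  have hFT0 : 0 ≤ Ff T := by
    unfold Ff
    have hlT0 : (0:ℝ) < Real.log T := by linarith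
    rw [sub_nonneg, div_le_div_iff₀ (by positivity) (by positivity)]
    nlinarith [sq_nonneg T]
  -- combine
  have hIbound : (∫ t in (1:ℝ)..X, |Mf t|) ≤ 216378740 + Ff X := by
    rw [hsplit]
    have := hmono.trans (le_of_eq hFTC)
    linarith
  have hBal := hBalazard X hX1
  -- bound |Mf X| / X
  have hMX : |Mf X| / X ≤ (0.006688 * L - 0.039) / L ^ 2 := by
    have h := h1 X hTX
    rw [← hLdef] at h
    rw [div_le_div_iff₀ hX0 (pow_pos hL0 2)]
    have h2' := mul_le_mul_of_nonneg_right h (sq_nonneg L)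
    have heq : (0.006688 * L - 0.039) * X / L ^ 2 * L ^ 2
        = (0.006688 * L - 0.039) * X := by field_simp
    calc |Mf X| * L ^ 2 ≤ (0.006688 * L - 0.039) * X / L ^ 2 * L ^ 2 := by
          simpa [sq] using h2'
      _ = (0.006688 * L - 0.039) * X := heq
  -- bound the integral term
  have hFX : (1 / X ^ 2) * (216378740 + Ff X)
      = 216378740 / X ^ 2 + 0.003344 / L - 0.017828 / L ^ 2 := by
    unfold Ff
    rw [← hLdef]
    field_simp
    ring
  -- the tail terms are small
  have hKey : 216378740 / X ^ 2 + 8 / (3 * X) ≤ 0.000028 / L ^ 2 := by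
    set q : ℝ := Real.sqrt X with hqdef
    set s : ℝ := Real.sqrt q with hsdef
    have hq0 : (0:ℝ) < q := Real.sqrt_pos.mpr hX0
    have hs0 : (0:ℝ) < s := Real.sqrt_pos.mpr hq0
    have hs2 : s ^ 2 = q := Real.sq_sqrt hq0.le
    have hq2 : q ^ 2 = X := Real.sq_sqrt hX0.le
    have hq7 : (10:ℝ) ^ 7 ≤ q := by nlinarith [hq2, hq0]
    have hLs : L ≤ 4 * s := by
      have hs4 : s ^ 4 = X := by
        have : s ^ 4 = (s ^ 2) ^ 2 := by ring
        rw [this, hs2, hq2]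
      have hLeq : L = 4 * Real.log s := by
        rw [hLdef, ← hs4, Real.log_pow]; push_cast; ring
      have := Real.log_le_sub_one_of_pos hs0
      rw [hLeq]; linarith
    have hL2 : L ^ 2 ≤ 16 * q := by nlinarith [hL0, hs2]
    rw [show X = q ^ 2 from hq2.symm,
      div_add_div _ _ (by positivity) (by positivity),
      div_le_div_iff₀ (by positivity) (pow_pos hL0 2)]
    have hq14 : (10:ℝ) ^ 14 ≤ q ^ 2 := by nlinarith
    have hP : (0:ℝ) ≤ 216378740 * (3 * q ^ 2) + (q ^ 2) ^ 2 * 8 := by positivity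
    nlinarith [mul_le_mul_of_nonneg_left hL2 hP,
      mul_le_mul_of_nonneg_right hq7 (pow_nonneg hq0.le 5),
      mul_le_mul_of_nonneg_right hq14 (pow_nonneg hq0.le 3)]
  -- put everything together
  have hmain : |mf X| ≤ (0.006688 * L - 0.039) / L ^ 2
      + (216378740 / X ^ 2 + 0.003344 / L - 0.017828 / L ^ 2) + 8 / (3 * X) := by
    refine hBal.trans ?_
    have hI2 : (1 / X ^ 2) * (∫ t in (1:ℝ)..X, |Mf t|)
        ≤ 216378740 / X ^ 2 + 0.003344 / L - 0.017828 / L ^ 2 := by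
      rw [← hFX]
      apply mul_le_mul_of_nonneg_left _ (by positivity)
      linarith
    linarith [hMX]
  have hfinal : (0.006688 * L - 0.039) / L ^ 2 + 0.003344 / L - 0.017828 / L ^ 2
      + 0.000028 / L ^ 2 = (0.010032 * L - 0.0568) / L ^ 2 := by
    field_simp
    ring
  linarith [hKey, hmain, hfinal]
end
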